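/- A bijection σ : 𝒢 → 𝒢 is an automorphism of the distant graph (𝒢, △), i.e. σ and σ⁻¹ preserve the distant relation, if and only if σ is an automorphism of the space of Z-reguli (𝒢, ℜ), i.e. σ and σ⁻¹ map every Z-regulus onto a Z-regulus. -/

import Mathlib

/-- The Grassmannian `𝒢` of all subspaces `X ≤ V` with `X ≅ V/X`. -/
def Grass (K V : Type*) [DivisionRing K] [AddCommGroup V] [Module K V] :
    Set (Submodule K V) :=
  {X | Nonempty (X ≃ₗ[K] (V ⧸ X))}

variable {K V : Type*} [DivisionRing K] [AddCommGroup V] [Module K V]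

/-- The dimension of the quotient `E / M` (computed as the rank of `E ⧸ (M ∩ E)`). -/
noncomputable def quotRank (M E : Submodule K V) : Cardinal :=
  Module.rank K (E ⧸ (M.comap E.subtype))

/-- Two subspaces are adjacent if `dim (X/(X ⊓ Y)) = dim (Y/(X ⊓ Y)) = 1`. -/
def Adjacent (X Y : Submodule K V) : Prop :=
  quotRank (X ⊓ Y) X = 1 ∧ quotRank (X ⊓ Y) Y = 1

/-- Two subspaces are distant if they are complementary: `X ⊕ Y = V`. -/
def Distant (X Y : Submodule K V) : Prop := IsCompl X Y

/-- The star `𝒢[M⟩` with centre `M`. -/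
def starSet (M : Submodule K V) : Set (Submodule K V) :=
  {E | M ≤ E ∧ quotRank M E = 1}

/-- `M` is the centre of a star, i.e. there is `X ∈ 𝒢` with `M ≤ X`, `dim (X/M) = 1`. -/
def IsStarCentre (M : Submodule K V) : Prop :=
  ∃ X ∈ Grass K V, M ≤ X ∧ quotRank M X = 1

/-- The top `𝒢⟨N]` with carrier `N`. -/
def topSet (N : Submodule K V) : Set (Submodule K V) :=
  {E | E ≤ N ∧ quotRank E N = 1}

/-- `N` is the carrier of a top, i.e. there is `X ∈ 𝒢` with `X ≤ N`, `dim (N/X) = 1`. -/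
def IsTopCarrier (N : Submodule K V) : Prop :=
  ∃ X ∈ Grass K V, X ≤ N ∧ quotRank X N = 1

/-- An adjacency clique: a set of mutually adjacent elements of `𝒢`. -/
def IsAdjClique (A : Set (Submodule K V)) : Prop :=
  A ⊆ Grass K V ∧ A.Pairwise Adjacent

/-- A maximal adjacency clique. -/
def IsMaxAdjClique (A : Set (Submodule K V)) : Prop :=
  IsAdjClique A ∧ ∀ B, IsAdjClique B → A ⊆ B → A = B

/-- The pencil `𝒢[M,N] = {X ∈ 𝒢 | M < X < N}`. -/
def pencilSet (M N : Submodule K V) : Set (Submodule K V) :=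
  {X ∈ Grass K V | M < X ∧ X < N}

/-- `(M, N)` defines a pencil: there is `X ∈ 𝒢` with `M ≤ X ≤ N` and
`dim (X/M) = dim (N/X) = 1`. -/
def IsPencilPair (M N : Submodule K V) : Prop :=
  ∃ X ∈ Grass K V, M ≤ X ∧ X ≤ N ∧ quotRank M X = 1 ∧ quotRank X N = 1

/-- A pencil in `𝒢`. -/
def IsPencil (S : Set (Submodule K V)) : Prop :=
  ∃ M N : Submodule K V, IsPencilPair M N ∧ S = pencilSet M N

/-- A point is a one-dimensional subspace. -/
def IsPoint (p : Submodule K V) : Prop := Module.rank K p = 1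

/-- A line is a two-dimensional subspace. -/
def IsLine (L : Submodule K V) : Prop := Module.rank K L = 2

/-- Two subspaces meet if they have a common point, i.e. nonzero intersection. -/
def Meets (X Y : Submodule K V) : Prop := X ⊓ Y ≠ ⊥

/-- A distant clique: a set of mutually distant elements of `𝒢`. -/
def IsDistantClique (R : Set (Submodule K V)) : Prop :=
  R ⊆ Grass K V ∧ R.Pairwise Distant

/-- A set has at least three elements. -/
def HasThree (R : Set (Submodule K V)) : Prop :=
  ∃ A ∈ R, ∃ B ∈ R, ∃ C ∈ R, A ≠ B ∧ A ≠ C ∧ B ≠ C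

/-- Condition (R2): if a line meets three mutually distinct elements of `R`
then it meets all elements of `R`. -/
def MeetsThreeMeetsAll (R : Set (Submodule K V)) : Prop :=
  ∀ L : Submodule K V, IsLine L →
    ∀ E₀ ∈ R, ∀ E₁ ∈ R, ∀ E₂ ∈ R, E₀ ≠ E₁ → E₀ ≠ E₂ → E₁ ≠ E₂ →
      Meets L E₀ → Meets L E₁ → Meets L E₂ → ∀ E ∈ R, Meets L E

/-- A partial `Z`-regulus: conditions (R1) and (R2). -/
def IsPartialZRegulus (R : Set (Submodule K V)) : Prop :=
  (IsDistantClique R ∧ HasThree R) ∧ MeetsThreeMeetsAll R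

/-- A `Z`-regulus: a partial `Z`-regulus that is maximal, i.e. not properly
contained in any partial `Z`-regulus. -/
def IsZRegulus (R : Set (Submodule K V)) : Prop :=
  IsPartialZRegulus R ∧ ∀ S : Set (Submodule K V), IsPartialZRegulus S → R ⊆ S → R = S

/-- A directrix of `R`: a line meeting all elements of `R`. -/
def IsDirectrix (R : Set (Submodule K V)) (L : Submodule K V) : Prop :=
  IsLine L ∧ ∀ E ∈ R, Meets L E

/-- Condition (⊠2) from Theorem `Zreg`. -/
def BoxTwo (R : Set (Submodule K V)) : Prop :=
  ∀ E₀ ∈ R, ∀ E₁ ∈ R, ∀ E₂ ∈ R, E₀ ≠ E₁ → E₀ ≠ E₂ → E₁ ≠ E₂ →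
    ∀ W ∈ Grass K V, Adjacent W E₀ → ¬ Distant W E₁ → ¬ Distant W E₂ →
      ∀ E ∈ R, ¬ Distant W E

open Submodule Set Cardinal

section PartA

lemma mem_sup_point {M : Submodule K V} {v x : V} :
    x ∈ M ⊔ span K {v} ↔ ∃ m ∈ M, ∃ c : K, m + c • v = x := by
  rw [Submodule.mem_sup]
  constructor
  · rintro ⟨m, hm, z, hz, rfl⟩
    obtain ⟨c, rfl⟩ := Submodule.mem_span_singleton.mp hz
    exact ⟨m, hm, c, rfl⟩
  · rintro ⟨m, hm, c, rfl⟩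
    exact ⟨m, hm, c • v, Submodule.mem_span_singleton.mpr ⟨c, rfl⟩, rfl⟩

lemma smul_mem_cases {M : Submodule K V} {v : V} {c : K} (h : c • v ∈ M) (hv : v ∉ M) : c = 0 := by
  by_contra hc
  exact hv (by simpa [smul_smul, inv_mul_cancel₀ hc] using M.smul_mem c⁻¹ h)

lemma inf_point_eq_bot {M : Submodule K V} {v : V} (hv : v ∉ M) : M ⊓ span K {v} = ⊥ := by
  rw [eq_bot_iff]
  rintro x ⟨hxM, hxv⟩
  obtain ⟨c, rfl⟩ := Submodule.mem_span_singleton.mp hxv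
  have := smul_mem_cases hxM hv
  simp [this]

/-- `K ≃ₗ` the quotient `E ⧸ M` when `E = M ⊔ Kv`, `v ∉ M`. -/
lemma quotRank_eq_one {M E : Submodule K V} (hME : M ≤ E) {v : V} (hvE : v ∈ E) (hvM : v ∉ M)
    (hgen : E ≤ M ⊔ span K {v}) : quotRank M E = 1 := by
  set M' : Submodule K E := M.comap E.subtype with hM'
  let f : K →ₗ[K] (E ⧸ M') := LinearMap.toSpanSingleton K (E ⧸ M') (Submodule.Quotient.mk (p := M') ⟨v, hvE⟩)
  have hinj : Function.Injective f := by
    intro c d hcd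
    have h0 : (c - d) • (Submodule.Quotient.mk (p := M') ⟨v, hvE⟩) = 0 := by
      rw [sub_smul, sub_eq_zero]; exact hcd
    rw [← Submodule.Quotient.mk_smul, Submodule.Quotient.mk_eq_zero] at h0
    have : (c - d) • v ∈ M := h0
    have := smul_mem_cases this hvM
    exact sub_eq_zero.mp this
  have hsurj : Function.Surjective f := by
    rintro x
    obtain ⟨⟨e, he⟩, rfl⟩ := Submodule.Quotient.mk_surjective _ x
    obtain ⟨m, hm, c, hmc⟩ := mem_sup_point.mp (hgen he)
    refine ⟨c, ?_⟩
    show (c • Submodule.Quotient.mk (p := M') ⟨v, hvE⟩ : E ⧸ M') = _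
    rw [← Submodule.Quotient.mk_smul, Submodule.Quotient.eq]
    show c • v - e ∈ M
    have : c • v - e = -m := by rw [← hmc]; abel
    rw [this]; exact M.neg_mem hm
  have e : K ≃ₗ[K] (E ⧸ M') := LinearEquiv.ofBijective f ⟨hinj, hsurj⟩
  have h := LinearEquiv.lift_rank_eq e
  rw [Module.rank_self, Cardinal.lift_one] at h
  rw [quotRank, ← hM']
  exact Cardinal.lift_eq_one.mp h.symm

lemma quotRank_one_exists {M E : Submodule K V} (h1 : quotRank M E = 1) :
    ∃ v ∈ E, v ∉ M := by
  by_contra hall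
  push_neg at hall
  have : M.comap E.subtype = ⊤ := by
    rw [eq_top_iff]; rintro ⟨e, he⟩ _; exact hall e he
  have : Subsingleton (E ⧸ M.comap E.subtype) :=
    Submodule.Quotient.subsingleton_iff.mpr this
  have h0 : quotRank M E = 0 := rank_subsingleton' _ _
  rw [h0] at h1; exact zero_ne_one h1

lemma quotRank_one_gen {M E : Submodule K V} (hME : M ≤ E) (h1 : quotRank M E = 1)
    {p : V} (hpE : p ∈ E) (hpM : p ∉ M) : E = M ⊔ span K {p} := by
  refine le_antisymm ?_ (sup_le hME ((Submodule.span_singleton_le_iff_mem _ _).mpr hpE))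
  intro e he
  by_contra hnot
  set M' : Submodule K E := M.comap E.subtype with hM'
  set pb : E ⧸ M' := Submodule.Quotient.mk ⟨p, hpE⟩ with hpb
  set eb : E ⧸ M' := Submodule.Quotient.mk ⟨e, he⟩ with heb
  have hpb0 : pb ≠ 0 := by
    rw [hpb, Ne, Submodule.Quotient.mk_eq_zero]; exact hpM
  have hns : ∀ a : K, a • pb ≠ eb := by
    intro a hae
    rw [hpb, heb, ← Submodule.Quotient.mk_smul, Submodule.Quotient.eq] at hae
    apply hnot
    have hm : a • p - e ∈ M := hae
    have he2 : e = -(a • p - e) + a • p := by abel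
    rw [he2]
    exact Submodule.add_mem _ (Submodule.mem_sup_left (M.neg_mem hm))
      (Submodule.mem_sup_right (Submodule.mem_span_singleton.mpr ⟨a, rfl⟩))
  have hli : LinearIndependent K ((↑) : ({pb, eb} : Set (E ⧸ M')) → E ⧸ M') :=
    linearIndepOn_id_pair hpb0 hns
  have hle : #({pb, eb} : Set (E ⧸ M')) ≤ Module.rank K (E ⧸ M') :=
    LinearIndependent.cardinal_le_rank' hli
  have hne : pb ≠ eb := by simpa using hns 1
  have hmk : #({pb, eb} : Set (E ⧸ M')) = 2 := by
    rw [Cardinal.mk_insert (by simpa using hne), Cardinal.mk_singleton]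
    norm_num
  rw [hmk] at hle
  have h1' : Module.rank K (E ⧸ M') = 1 := h1
  rw [h1'] at hle
  norm_num at hle

end PartA
section PartB

lemma quotRank_bot_eq (E : Submodule K V) : quotRank ⊥ E = Module.rank K E := by
  have hc : ((⊥ : Submodule K V).comap E.subtype) = ⊥ := by
    rw [Submodule.comap_bot, Submodule.ker_subtype]
  rw [quotRank, hc]
  exact LinearEquiv.rank_eq (Submodule.quotEquivOfEqBot _ rfl)

lemma grass_quot_rank {X : Submodule K V} (hX : X ∈ Grass K V) :
    Module.rank K (V ⧸ X) = Module.rank K X :=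
  (LinearEquiv.rank_eq (Classical.choice hX)).symm

lemma grass_one_lt_rank (hV : 2 < Module.rank K V) {X : Submodule K V} (hX : X ∈ Grass K V) :
    1 < Module.rank K X := by
  by_contra h
  push_neg at h
  have hq := Submodule.rank_quotient_add_rank X
  rw [grass_quot_rank hX] at hq
  have h2 : Module.rank K V ≤ 2 := by
    rw [← hq]
    calc Module.rank K X + Module.rank K X ≤ 1 + 1 := add_le_add h h
    _ = 2 := by norm_num
  exact absurd hV (not_lt.mpr h2)

lemma grass_ne_bot (hV : 2 < Module.rank K V) {X : Submodule K V} (hX : X ∈ Grass K V) :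
    X ≠ ⊥ := by
  intro h
  have h1 := grass_one_lt_rank hV hX
  rw [h, rank_bot] at h1
  exact absurd h1 (by simp)

lemma distant_not_self (hV : 2 < Module.rank K V) {X : Submodule K V} : ¬ Distant X X := by
  intro h
  have h1 : X = ⊥ := disjoint_self.mp h.disjoint
  have h2 : X = ⊤ := codisjoint_self.mp h.codisjoint
  have hsub : Subsingleton V := by
    constructor
    intro a b
    have ha : a ∈ (⊥ : Submodule K V) := by rw [← h1, h2]; trivial
    have hb : b ∈ (⊥ : Submodule K V) := by rw [← h1, h2]; trivial
    rw [Submodule.mem_bot] at ha hb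
    rw [ha, hb]
  have : Module.rank K V = 0 := rank_subsingleton' _ _
  rw [this] at hV
  exact absurd hV (by simp)

lemma Distant.ne (hV : 2 < Module.rank K V) {X Y : Submodule K V} (h : Distant X Y) :
    X ≠ Y := by
  rintro rfl
  exact distant_not_self hV h

lemma Distant.symm' {X Y : Submodule K V} (h : Distant X Y) : Distant Y X := h.symm

/-- `M × K ≃ₗ M ⊔ Kv` when `v ∉ M`. -/
noncomputable def ptEquiv (M : Submodule K V) (v : V) (hv : v ∉ M) :
    (M × K) ≃ₗ[K] ↥(M ⊔ span K {v}) := by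
  let f : (M × K) →ₗ[K] V :=
    M.subtype.comp (LinearMap.fst K M K) +
      (LinearMap.toSpanSingleton K V v).comp (LinearMap.snd K M K)
  have hf : ∀ p : M × K, f p = (p.1 : V) + p.2 • v := fun p => rfl
  have hinj : Function.Injective f := by
    rw [injective_iff_map_eq_zero]
    rintro ⟨m, c⟩ h0
    rw [hf] at h0
    have hcv : c • v ∈ M := by
      have : c • v = -(m : V) := by
        rw [eq_neg_iff_add_eq_zero, add_comm]; exact h0
      rw [this]; exact M.neg_mem m.2
    have hc0 : c = 0 := smul_mem_cases hcv hv
    subst hc0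
    simp only [zero_smul, add_zero] at h0
    have : m = 0 := Subtype.ext h0
    simp [this]
  have hrange : LinearMap.range f = M ⊔ span K {v} := by
    apply le_antisymm
    · rintro x ⟨⟨m, c⟩, rfl⟩
      rw [hf]
      exact mem_sup_point.mpr ⟨m, m.2, c, rfl⟩
    · intro x hx
      obtain ⟨m, hm, c, rfl⟩ := mem_sup_point.mp hx
      exact ⟨⟨⟨m, hm⟩, c⟩, rfl⟩
  exact (LinearEquiv.ofInjective f hinj).trans (LinearEquiv.ofEq _ _ hrange)

lemma nonempty_equiv_sup_point {M : Submodule K V} {v w : V} (hv : v ∉ M) (hw : w ∉ M) :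
    Nonempty (↥(M ⊔ span K {v}) ≃ₗ[K] ↥(M ⊔ span K {w})) :=
  ⟨(ptEquiv M v hv).symm.trans (ptEquiv M w hw)⟩

lemma compl_mem_grass {Z W : Submodule K V} (hZ : Z ∈ Grass K V) (h : IsCompl Z W) :
    W ∈ Grass K V := by
  obtain ⟨e⟩ := hZ
  have e1 := Submodule.quotientEquivOfIsCompl Z W h
  have e2 := Submodule.quotientEquivOfIsCompl W Z h.symm
  exact ⟨e1.symm.trans (e.symm.trans e2.symm)⟩

lemma exists_compl_mem_grass {Z : Submodule K V} (hZ : Z ∈ Grass K V) {U : Submodule K V}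
    (hU : U ⊓ Z = ⊥) : ∃ W, W ∈ Grass K V ∧ IsCompl Z W ∧ U ≤ W := by
  obtain ⟨W', hW'⟩ := Submodule.exists_isCompl (Z ⊔ U)
  have hcompl : IsCompl Z (U ⊔ W') := by
    constructor
    · rw [disjoint_iff, eq_bot_iff]
      rintro x ⟨hxZ, hxUW⟩
      obtain ⟨u, hu, w', hw', rfl⟩ := Submodule.mem_sup.mp hxUW
      have hwmem : w' ∈ (Z ⊔ U) ⊓ W' := by
        refine ⟨?_, hw'⟩
        have : w' = (u + w') - u := by abel
        rw [this]
        exact Submodule.sub_mem _ (Submodule.mem_sup_left hxZ) (Submodule.mem_sup_right hu)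
      rw [disjoint_iff.mp hW'.disjoint] at hwmem
      rw [Submodule.mem_bot] at hwmem
      subst hwmem
      rw [add_zero] at hxZ ⊢
      have : u ∈ U ⊓ Z := ⟨hu, hxZ⟩
      rw [hU] at this
      exact this
    · rw [codisjoint_iff, ← sup_assoc]
      exact codisjoint_iff.mp hW'.codisjoint
  exact ⟨U ⊔ W', compl_mem_grass hZ hcompl, hcompl, le_sup_left⟩

end PartB
section PartC

/-- Distant-relation characterisation of adjacency. -/
def AdjChar (X Y : Submodule K V) : Prop :=
  X ≠ Y ∧ ¬ Distant X Y ∧ ∃ Z ∈ Grass K V, Z ≠ X ∧ Z ≠ Y ∧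
    ∀ W ∈ Grass K V, Distant W Z → (Distant W X ∨ Distant W Y)

lemma rank_le_one_span (v : V) : Module.rank K (span K {v}) ≤ 1 := by
  simpa using _root_.rank_span_le (R := K) ({v} : Set V)


lemma disjoint_sup_point {W M : Submodule K V} {v : V}
    (hWM : Disjoint W M) (hv : v ∉ W ⊔ M) : Disjoint W (M ⊔ span K {v}) := by
  rw [disjoint_iff, eq_bot_iff]
  rintro x ⟨hxW, hxX⟩
  obtain ⟨m, hm, t, hmt⟩ := mem_sup_point.mp hxX
  have htv : t • v ∈ W ⊔ M := by
    have : t • v = x - m := by rw [← hmt]; abel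
    rw [this]
    exact Submodule.sub_mem _ (Submodule.mem_sup_left hxW) (Submodule.mem_sup_right hm)
  have ht0 : t = 0 := smul_mem_cases htv hv
  rw [ht0, zero_smul, add_zero] at hmt
  have : x ∈ W ⊓ M := ⟨hxW, hmt ▸ hm⟩
  rw [disjoint_iff.mp hWM] at this
  exact this

lemma codisjoint_helper {W M : Submodule K V} {v w : V}
    (htop : (W ⊔ M) ⊔ span K {v} = ⊤)
    (hvw : v ∈ (W ⊔ M) ⊔ span K {w}) : W ⊔ (M ⊔ span K {w}) = ⊤ := by
  rw [← sup_assoc, eq_top_iff, ← htop]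
  exact sup_le le_sup_left ((Submodule.span_singleton_le_iff_mem _ _).mpr hvw)

lemma adjacent_adjChar (hV : 2 < Module.rank K V) {X Y : Submodule K V}
    (hX : X ∈ Grass K V) (hY : Y ∈ Grass K V) (h : Adjacent X Y) : AdjChar X Y := by
  obtain ⟨h1, h2⟩ := h
  obtain ⟨a, haX, haM⟩ := quotRank_one_exists h1
  obtain ⟨b, hbY, hbM⟩ := quotRank_one_exists h2
  set M := X ⊓ Y with hM
  have hMX : M ≤ X := inf_le_left
  have hMY : M ≤ Y := inf_le_right
  have hXa : X = M ⊔ span K {a} := quotRank_one_gen hMX h1 haX haM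
  have hYb : Y = M ⊔ span K {b} := quotRank_one_gen hMY h2 hbY hbM
  have hne : X ≠ Y := by
    rintro rfl
    exact haM (by simpa [hM] using haX)
  have hMbot : M ≠ ⊥ := by
    intro hbot
    have : Module.rank K X ≤ 1 := by
      rw [hXa, hbot, bot_sup_eq]
      exact rank_le_one_span a
    exact absurd (grass_one_lt_rank hV hX) (not_lt.mpr this)
  have hnd : ¬ Distant X Y := by
    intro hd
    exact hMbot (by rw [hM]; exact disjoint_iff.mp hd.disjoint)
  -- the third pencil element
  set Z := M ⊔ span K {a + b} with hZdef
  have habX : a + b ∉ X := by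
    intro hmem
    exact hbM ⟨by
      have : b = (a + b) - a := by abel
      rw [this]; exact X.sub_mem hmem haX, hbY⟩
  have habY : a + b ∉ Y := by
    intro hmem
    exact haM ⟨haX, by
      have : a = (a + b) - b := by abel
      rw [this]; exact Y.sub_mem hmem hbY⟩
  have habM : a + b ∉ M := fun hmem => habX (hMX hmem)
  have habZ : a + b ∈ Z := Submodule.mem_sup_right (Submodule.mem_span_singleton_self _)
  have hZX : Z ≠ X := fun he => habX (he ▸ habZ)
  have hZY : Z ≠ Y := fun he => habY (he ▸ habZ)
  have ha0 : a ≠ 0 := fun he => haM (he ▸ M.zero_mem)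
  have hb0 : b ≠ 0 := fun he => hbM (he ▸ M.zero_mem)
  -- Z ∈ Grass
  have hZG : Z ∈ Grass K V := by
    obtain ⟨C, hC⟩ := Submodule.exists_isCompl (X ⊔ span K {b})
    set T := X ⊔ span K {b} with hTdef
    have hCT : C ⊓ T = ⊥ := by
      rw [inf_comm]; exact disjoint_iff.mp hC.disjoint
    have haT : a ∈ T := Submodule.mem_sup_left haX
    have hbT : b ∈ T := Submodule.mem_sup_right (Submodule.mem_span_singleton_self _)
    have habT : a + b ∈ T := T.add_mem haT hbT
    have hMT : M ≤ T := le_trans hMX le_sup_left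
    have haC : a ∉ C := by
      intro hmem
      have : a ∈ C ⊓ T := ⟨hmem, haT⟩
      rw [hCT] at this
      exact ha0 this
    have hbC : b ∉ C := by
      intro hmem
      have : b ∈ C ⊓ T := ⟨hmem, hbT⟩
      rw [hCT] at this
      exact hb0 (by simpa using this)
    have hcompl1 : IsCompl Z (C ⊔ span K {a}) := by
      constructor
      · rw [disjoint_iff, eq_bot_iff]
        rintro x ⟨hx1, hx2⟩
        obtain ⟨m, hm, s, hms⟩ := mem_sup_point.mp hx1
        obtain ⟨c, hcC, t, hct⟩ := mem_sup_point.mp hx2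
        have hxT : x ∈ T := by
          rw [← hms]; exact T.add_mem (hMT hm) (T.smul_mem s habT)
        have hcT : c ∈ T := by
          have hc : c = x - t • a := by rw [← hct]; abel
          rw [hc]; exact T.sub_mem hxT (T.smul_mem t haT)
        have hc0 : c = 0 := by
          have : c ∈ C ⊓ T := ⟨hcC, hcT⟩
          rw [hCT] at this; exact this
        have hxa : x = t • a := by rw [← hct, hc0, zero_add]
        have hsb : s • b = t • a - m - s • a := by
          rw [eq_sub_iff_add_eq, eq_sub_iff_add_eq]
          have h8 : s • b + s • a + m = m + s • (a + b) := by rw [smul_add]; abel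
          rw [h8, hms, hxa]
        have hsbM : s • b ∈ M := by
          refine ⟨?_, Y.smul_mem s hbY⟩
          rw [hsb]
          exact X.sub_mem (X.sub_mem (X.smul_mem t haX) (hMX hm)) (X.smul_mem s haX)
        have hs0 : s = 0 := smul_mem_cases hsbM hbM
        have hxm : x = m := by rw [← hms, hs0, zero_smul, add_zero]
        have htaM : t • a ∈ M := by rw [← hxa, hxm]; exact hm
        have ht0 : t = 0 := smul_mem_cases htaM haM
        rw [Submodule.mem_bot, hxa, ht0, zero_smul]
      · rw [codisjoint_iff, eq_top_iff, ← codisjoint_iff.mp hC.codisjoint]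
        apply sup_le
        · rw [hTdef]
          apply sup_le
          · rw [hXa]
            apply sup_le
            · exact le_trans le_sup_left le_sup_left
            · exact le_trans le_sup_right le_sup_right
          · rw [Submodule.span_singleton_le_iff_mem]
            have : b = (a + b) - a := by abel
            rw [this]
            refine Submodule.sub_mem _ ?_ ?_
            · exact Submodule.mem_sup_left habZ
            · exact Submodule.mem_sup_right (Submodule.mem_sup_right (Submodule.mem_span_singleton_self _))
        · exact le_trans le_sup_left le_sup_right
    have hcompl2 : IsCompl X (C ⊔ span K {b}) := by
      constructor
      · rw [disjoint_iff, eq_bot_iff]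
        rintro x ⟨hx1, hx2⟩
        obtain ⟨c, hcC, t, hct⟩ := mem_sup_point.mp hx2
        have hcT : c ∈ T := by
          have hc : c = x - t • b := by rw [← hct]; abel
          rw [hc]
          exact T.sub_mem (Submodule.mem_sup_left hx1) (T.smul_mem t hbT)
        have hc0 : c = 0 := by
          have : c ∈ C ⊓ T := ⟨hcC, hcT⟩
          rw [hCT] at this; exact this
        have hxb : x = t • b := by rw [← hct, hc0, zero_add]
        have htb : t • b ∈ M := ⟨by rw [← hxb]; exact hx1, Y.smul_mem t hbY⟩
        have ht0 : t = 0 := smul_mem_cases htb hbM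
        rw [Submodule.mem_bot, hxb, ht0, zero_smul]
      · rw [codisjoint_iff, eq_top_iff, ← codisjoint_iff.mp hC.codisjoint]
        apply sup_le
        · rw [hTdef]
          apply sup_le
          · exact le_sup_left
          · exact le_trans le_sup_right le_sup_right
        · exact le_trans le_sup_left le_sup_right
    -- assemble the equivalences
    obtain ⟨eX⟩ := hX
    have e1 : Nonempty (↥Z ≃ₗ[K] ↥X) := by
      rw [hZdef, hXa]
      exact nonempty_equiv_sup_point habM haM
    obtain ⟨e1'⟩ := e1
    have e2 := Submodule.quotientEquivOfIsCompl Z (C ⊔ span K {a}) hcompl1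
    have e3 := Submodule.quotientEquivOfIsCompl X (C ⊔ span K {b}) hcompl2
    obtain ⟨e4⟩ := nonempty_equiv_sup_point haC hbC
    exact ⟨e1'.trans (eX.trans (e3.trans (e4.symm.trans e2.symm)))⟩
  refine ⟨hne, hnd, Z, hZG, hZX, hZY, ?_⟩
  intro W _ hWZ
  set U := W ⊔ M with hUdef
  have hWZbot : W ⊓ Z = ⊥ := disjoint_iff.mp hWZ.disjoint
  have hWM : Disjoint W M :=
    hWZ.disjoint.mono_right (le_sup_left : M ≤ Z)
  have hUtop : U ⊔ span K {a + b} = ⊤ := by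
    rw [hUdef, sup_assoc]
    exact codisjoint_iff.mp hWZ.codisjoint
  have habU : a + b ∉ U := by
    intro hmem
    obtain ⟨w, hw, m, hm, hwm⟩ := Submodule.mem_sup.mp hmem
    have hwZ : w ∈ W ⊓ Z := by
      refine ⟨hw, ?_⟩
      have : w = (a + b) - m := by rw [← hwm]; abel
      rw [this]
      exact Z.sub_mem habZ (Submodule.mem_sup_left hm)
    rw [hWZbot] at hwZ
    rw [Submodule.mem_bot] at hwZ
    rw [hwZ, zero_add] at hwm
    exact habM (hwm ▸ hm)
  by_cases haU : a ∈ U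
  · -- W is a complement of Y
    right
    have hbU : b ∉ U := fun hb => habU (U.add_mem haU hb)
    refine ⟨?_, codisjoint_iff.mpr ?_⟩
    · rw [hYb]
      exact disjoint_sup_point hWM hbU
    · rw [hYb]
      exact codisjoint_helper hUtop
        (Submodule.add_mem _ (Submodule.mem_sup_left haU)
          (Submodule.mem_sup_right (Submodule.mem_span_singleton_self b)))
  · by_cases hbU : b ∈ U
    · -- W is a complement of X
      left
      refine ⟨?_, codisjoint_iff.mpr ?_⟩
      · rw [hXa]
        exact disjoint_sup_point hWM haU
      · rw [hXa]
        exact codisjoint_helper hUtop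
          (Submodule.add_mem _
            (Submodule.mem_sup_right (Submodule.mem_span_singleton_self a))
            (Submodule.mem_sup_left hbU))
    · -- generic case : W is a complement of X
      left
      have hatop : a ∈ U ⊔ span K {a + b} := by rw [hUtop]; trivial
      obtain ⟨u, hu, lam, hlam⟩ := mem_sup_point.mp hatop
      have hlam0 : lam ≠ 0 := by
        rintro rfl
        rw [zero_smul, add_zero] at hlam
        exact haU (hlam ▸ hu)
      have hbUa : b ∈ U ⊔ span K {a} := by
        have hlb : lam • b = a - u - lam • a := by
          have h6 : u + (lam • a + lam • b) = a := by
            rw [← smul_add]; exact hlam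
          rw [eq_sub_iff_add_eq, eq_sub_iff_add_eq]
          have h7 : lam • b + lam • a + u = u + (lam • a + lam • b) := by abel
          rw [h7, h6]
        have : b = lam⁻¹ • (a - u - lam • a) := by
          rw [← hlb, smul_smul, inv_mul_cancel₀ hlam0, one_smul]
        rw [this]
        refine Submodule.smul_mem _ _ ?_
        refine Submodule.sub_mem _ (Submodule.sub_mem _ ?_ ?_) ?_
        · exact Submodule.mem_sup_right (Submodule.mem_span_singleton_self a)
        · exact Submodule.mem_sup_left hu
        · exact Submodule.mem_sup_right (Submodule.smul_mem _ _ (Submodule.mem_span_singleton_self a))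
      refine ⟨?_, codisjoint_iff.mpr ?_⟩
      · rw [hXa]
        exact disjoint_sup_point hWM haU
      · rw [hXa]
        exact codisjoint_helper hUtop
          (Submodule.add_mem _
            (Submodule.mem_sup_right (Submodule.mem_span_singleton_self a)) hbUa)

end PartC
section PartD

lemma nondistant_of_lt_left {Z X W : Submodule K V} (hXZ : X ≤ Z) (hne : Z ≠ X)
    (h : IsCompl Z W) : ¬ Distant W X := by
  intro hd
  have h1 : (X ⊔ W) ⊓ Z = X ⊔ (W ⊓ Z) := sup_inf_assoc_of_le W hXZ
  have h2 : X ⊔ W = ⊤ := by rw [sup_comm]; exact codisjoint_iff.mp hd.codisjoint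
  have h3 : W ⊓ Z = ⊥ := by rw [inf_comm]; exact disjoint_iff.mp h.disjoint
  rw [h2, h3, top_inf_eq, sup_bot_eq] at h1
  exact hne h1

lemma nondistant_of_lt_right {Z X W : Submodule K V} (hZX : Z ≤ X) (hne : Z ≠ X)
    (h : IsCompl Z W) : ¬ Distant W X := by
  intro hd
  have h1 : (Z ⊔ W) ⊓ X = Z ⊔ (W ⊓ X) := sup_inf_assoc_of_le W hZX
  have h2 : Z ⊔ W = ⊤ := codisjoint_iff.mp h.codisjoint
  have h3 : W ⊓ X = ⊥ := disjoint_iff.mp hd.disjoint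
  rw [h2, h3, top_inf_eq, sup_bot_eq] at h1
  exact hne h1.symm

lemma nondistant_auto {Z X W : Submodule K V} (hh : X ≤ Z ∨ Z ≤ X) (hne : Z ≠ X)
    (h : IsCompl Z W) : ¬ Distant W X :=
  hh.elim (fun hle => nondistant_of_lt_left hle hne h)
    (fun hle => nondistant_of_lt_right hle hne h)

lemma nondistant_of_mem {W X : Submodule K V} {v : V} (hv0 : v ≠ 0) (hW : v ∈ W)
    (hX : v ∈ X) : ¬ Distant W X := by
  intro hd
  apply hv0
  have : v ∈ W ⊓ X := ⟨hW, hX⟩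
  rwa [disjoint_iff.mp hd.disjoint, Submodule.mem_bot] at this

lemma not_distant_aux {Z W S X' : Submodule K V} (hZW : IsCompl Z W) (hSZ : S ≤ Z)
    (hSne : S ≠ Z) (hle : X' ≤ W ⊔ S) : ¬ Distant W X' := by
  intro hd
  have htop : W ⊔ S = ⊤ := by
    rw [eq_top_iff, ← codisjoint_iff.mp hd.codisjoint]
    exact sup_le le_sup_left hle
  have hWZ : W ⊓ Z = ⊥ := by rw [inf_comm]; exact disjoint_iff.mp hZW.disjoint
  have hmod : (S ⊔ W) ⊓ Z = S ⊔ (W ⊓ Z) := sup_inf_assoc_of_le W hSZ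
  rw [sup_comm S W, htop, top_inf_eq, hWZ, sup_bot_eq] at hmod
  exact hSne hmod.symm

lemma exists_bad_W (hV : 2 < Module.rank K V) {X Y Z : Submodule K V}
    (hX : X ∈ Grass K V) (hY : Y ∈ Grass K V) (hZ : Z ∈ Grass K V)
    (hXY : X ≠ Y) (hnadj : ¬ Adjacent X Y) (hZX : Z ≠ X) (hZY : Z ≠ Y) :
    ∃ W ∈ Grass K V, Distant W Z ∧ ¬ Distant W X ∧ ¬ Distant W Y := by
  by_cases hXH : X ≤ Z ∨ Z ≤ X
  · by_cases hYH : Y ≤ Z ∨ Z ≤ Y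
    · obtain ⟨W, hWG, hWc, -⟩ := exists_compl_mem_grass hZ (U := ⊥) (by simp)
      exact ⟨W, hWG, hWc.symm, nondistant_auto hXH hZX hWc, nondistant_auto hYH hZY hWc⟩
    · have hY1 : ¬ Y ≤ Z := fun h => hYH (Or.inl h)
      obtain ⟨y, hyY, hyZ⟩ := SetLike.not_le_iff_exists.mp hY1
      have hd : span K {y} ⊓ Z = ⊥ := by rw [inf_comm]; exact inf_point_eq_bot hyZ
      obtain ⟨W, hWG, hWc, hle⟩ := exists_compl_mem_grass hZ hd
      have hy0 : y ≠ 0 := fun h => hyZ (h ▸ Z.zero_mem)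
      exact ⟨W, hWG, hWc.symm, nondistant_auto hXH hZX hWc,
        nondistant_of_mem hy0 (hle (Submodule.mem_span_singleton_self y)) hyY⟩
  · by_cases hYH : Y ≤ Z ∨ Z ≤ Y
    · have hX1 : ¬ X ≤ Z := fun h => hXH (Or.inl h)
      obtain ⟨x, hxX, hxZ⟩ := SetLike.not_le_iff_exists.mp hX1
      have hd : span K {x} ⊓ Z = ⊥ := by rw [inf_comm]; exact inf_point_eq_bot hxZ
      obtain ⟨W, hWG, hWc, hle⟩ := exists_compl_mem_grass hZ hd
      have hx0 : x ≠ 0 := fun h => hxZ (h ▸ Z.zero_mem)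
      exact ⟨W, hWG, hWc.symm,
        nondistant_of_mem hx0 (hle (Submodule.mem_span_singleton_self x)) hxX,
        nondistant_auto hYH hZY hWc⟩
    · have hX1 : ¬ X ≤ Z := fun h => hXH (Or.inl h)
      have hY1 : ¬ Y ≤ Z := fun h => hYH (Or.inl h)
      obtain ⟨x₀, hx₀X, hx₀Z⟩ := SetLike.not_le_iff_exists.mp hX1
      obtain ⟨y₀, hy₀Y, hy₀Z⟩ := SetLike.not_le_iff_exists.mp hY1
      have hx₀0 : x₀ ≠ 0 := fun h => hx₀Z (h ▸ Z.zero_mem)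
      by_cases hD1 : ∃ x, x ∈ X ∧ x ∉ Z ∧ ∃ y, y ∈ Y ∧ y ∉ Z ⊔ span K {x}
      · obtain ⟨x, hxX, hxZ, y, hyY, hyZx⟩ := hD1
        have hx0 : x ≠ 0 := fun h => hxZ (h ▸ Z.zero_mem)
        have hy0 : y ≠ 0 := fun h => hyZx (h ▸ (Z ⊔ span K {x}).zero_mem)
        have hd : (span K {x} ⊔ span K {y}) ⊓ Z = ⊥ := by
          rw [eq_bot_iff]
          rintro u ⟨hu1, hu2⟩
          obtain ⟨p, hp, q, hq, hpq⟩ := Submodule.mem_sup.mp hu1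
          obtain ⟨c, rfl⟩ := Submodule.mem_span_singleton.mp hp
          obtain ⟨d, rfl⟩ := Submodule.mem_span_singleton.mp hq
          have hd0 : d = 0 := by
            by_contra hdne
            apply hyZx
            have : y = d⁻¹ • (u - c • x) := by
              rw [← hpq, add_sub_cancel_left, smul_smul, inv_mul_cancel₀ hdne, one_smul]
            rw [this]
            refine Submodule.smul_mem _ _ (Submodule.sub_mem _ ?_ ?_)
            · exact Submodule.mem_sup_left hu2
            · exact Submodule.mem_sup_right (Submodule.smul_mem _ _ (Submodule.mem_span_singleton_self x))
          rw [hd0, zero_smul, add_zero] at hpq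
          have hc0 : c = 0 := smul_mem_cases (hpq ▸ hu2) hxZ
          rw [← hpq, hc0, zero_smul]
          exact (Submodule.mem_bot _).mpr rfl
        obtain ⟨W, hWG, hWc, hle⟩ := exists_compl_mem_grass hZ hd
        refine ⟨W, hWG, hWc.symm, ?_, ?_⟩
        · exact nondistant_of_mem hx0
            (hle (Submodule.mem_sup_left (Submodule.mem_span_singleton_self x))) hxX
        · exact nondistant_of_mem hy0
            (hle (Submodule.mem_sup_right (Submodule.mem_span_singleton_self y))) hyY
      · push_neg at hD1
        have h2 : ∀ x ∈ X, x ∉ Z → ∀ y ∈ Y, y ∈ Z ⊔ span K {x} := by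
          intro x hx hxZ y hy
          by_contra hcon
          exact hcon (hD1 x hx hxZ y hy)
        have hYle : Y ≤ Z ⊔ span K {x₀} := fun y hy => h2 x₀ hx₀X hx₀Z y hy
        have hXle : X ≤ Z ⊔ span K {x₀} := by
          intro x hx
          by_cases hxZ : x ∈ Z
          · exact Submodule.mem_sup_left hxZ
          · obtain ⟨z, hz, c, hzc⟩ := mem_sup_point.mp (h2 x hx hxZ y₀ hy₀Y)
            have hc0 : c ≠ 0 := by
              rintro rfl
              rw [zero_smul, add_zero] at hzc
              exact hy₀Z (hzc ▸ hz)
            have hxeq : x = c⁻¹ • (y₀ - z) := by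
              rw [← hzc, add_sub_cancel_left, smul_smul, inv_mul_cancel₀ hc0, one_smul]
            rw [hxeq]
            exact Submodule.smul_mem _ _ (Submodule.sub_mem _ (hYle hy₀Y) (Submodule.mem_sup_left hz))
        set A := X ⊓ Z with hA
        set B := Y ⊓ Z with hB
        have hAZ : A ≤ Z := inf_le_right
        have hBZ : B ≤ Z := inf_le_right
        have hx₀A : x₀ ∉ A := fun h => hx₀Z h.2
        have hXA : X = A ⊔ span K {x₀} := by
          apply le_antisymm
          · intro x hx
            obtain ⟨z, hz, c, hzc⟩ := mem_sup_point.mp (hXle hx)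
            have hzX : z ∈ A := by
              refine ⟨?_, hz⟩
              have : z = x - c • x₀ := by rw [← hzc]; abel
              rw [this]
              exact X.sub_mem hx (X.smul_mem c hx₀X)
            rw [← hzc]
            exact Submodule.add_mem _ (Submodule.mem_sup_left hzX)
              (Submodule.mem_sup_right (Submodule.smul_mem _ _ (Submodule.mem_span_singleton_self x₀)))
          · exact sup_le inf_le_left ((Submodule.span_singleton_le_iff_mem _ _).mpr hx₀X)
        obtain ⟨z', hz', c', hzc'⟩ := mem_sup_point.mp (hYle hy₀Y)
        have hc'0 : c' ≠ 0 := by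
          rintro rfl
          rw [zero_smul, add_zero] at hzc'
          exact hy₀Z (hzc' ▸ hz')
        set y₁ := c'⁻¹ • y₀ with hy₁def
        have hy₁Y : y₁ ∈ Y := Y.smul_mem _ hy₀Y
        set z₀ := c'⁻¹ • z' with hz₀def
        have hz₀Z : z₀ ∈ Z := Z.smul_mem _ hz'
        have hy₁ : y₁ = z₀ + x₀ := by
          rw [hy₁def, hz₀def, ← hzc', smul_add, smul_smul, inv_mul_cancel₀ hc'0, one_smul]
        have hy₁Z : y₁ ∉ Z := by
          intro h
          apply hx₀Z
          have : x₀ = y₁ - z₀ := by rw [hy₁]; abel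
          rw [this]
          exact Z.sub_mem h hz₀Z
        have hy₁0 : y₁ ≠ 0 := fun h => hy₁Z (h ▸ Z.zero_mem)
        have hy₁B : y₁ ∉ B := fun h => hy₁Z h.2
        have hYB : Y = B ⊔ span K {y₁} := by
          apply le_antisymm
          · intro y hy
            obtain ⟨z, hz, c, hzc⟩ := mem_sup_point.mp (hYle hy)
            have hkey : y = (z - c • z₀) + c • y₁ := by
              rw [hy₁, smul_add, ← hzc]
              abel
            have hzB : z - c • z₀ ∈ B := by
              refine ⟨?_, Z.sub_mem hz (Z.smul_mem c hz₀Z)⟩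
              have : z - c • z₀ = y - c • y₁ := by rw [hkey]; abel
              rw [this]
              exact Y.sub_mem hy (Y.smul_mem c hy₁Y)
            rw [hkey]
            exact Submodule.add_mem _ (Submodule.mem_sup_left hzB)
              (Submodule.mem_sup_right (Submodule.smul_mem _ _ (Submodule.mem_span_singleton_self y₁)))
          · exact sup_le inf_le_left ((Submodule.span_singleton_le_iff_mem _ _).mpr hy₁Y)
        by_cases hz₀AB : z₀ ∈ A ⊔ B
        · obtain ⟨α, hα, β, hβ, hαβ⟩ := Submodule.mem_sup.mp hz₀AB
          set v := x₀ + α with hv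
          have hvX : v ∈ X := X.add_mem hx₀X hα.1
          have hvY : v ∈ Y := by
            have : v = y₁ - β := by rw [hv, hy₁, ← hαβ]; abel
            rw [this]
            exact Y.sub_mem hy₁Y hβ.1
          have hvZ : v ∉ Z := by
            intro h
            apply hx₀Z
            have : x₀ = v - α := by rw [hv]; abel
            rw [this]
            exact Z.sub_mem h hα.2
          have hv0 : v ≠ 0 := fun h => hvZ (h ▸ Z.zero_mem)
          have hd : span K {v} ⊓ Z = ⊥ := by rw [inf_comm]; exact inf_point_eq_bot hvZ
          obtain ⟨W, hWG, hWc, hle⟩ := exists_compl_mem_grass hZ hd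
          exact ⟨W, hWG, hWc.symm,
            nondistant_of_mem hv0 (hle (Submodule.mem_span_singleton_self v)) hvX,
            nondistant_of_mem hv0 (hle (Submodule.mem_span_singleton_self v)) hvY⟩
        · by_cases hBz : B ⊔ span K {z₀} = Z
          · by_cases hAz : A ⊔ span K {z₀} = Z
            · -- contradiction : X and Y are adjacent
              exfalso
              have hBA : B ≤ A := by
                intro b hb
                obtain ⟨α, hα, c, hαc⟩ := mem_sup_point.mp (hAz ▸ hb.2 : b ∈ A ⊔ span K {z₀})
                have hcz : c • z₀ ∈ A ⊔ B := by
                  have : c • z₀ = b - α := by rw [← hαc]; abel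
                  rw [this]
                  exact Submodule.sub_mem _ (Submodule.mem_sup_right hb)
                    (Submodule.mem_sup_left hα)
                have hc0 : c = 0 := smul_mem_cases hcz hz₀AB
                rw [hc0, zero_smul, add_zero] at hαc
                exact hαc ▸ hα
              have hAB : A ≤ B := by
                intro a ha
                obtain ⟨β, hβ, c, hβc⟩ := mem_sup_point.mp (hBz ▸ ha.2 : a ∈ B ⊔ span K {z₀})
                have hcz : c • z₀ ∈ A ⊔ B := by
                  have : c • z₀ = a - β := by rw [← hβc]; abel
                  rw [this]
                  exact Submodule.sub_mem _ (Submodule.mem_sup_left ha)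
                    (Submodule.mem_sup_right hβ)
                have hc0 : c = 0 := smul_mem_cases hcz hz₀AB
                rw [hc0, zero_smul, add_zero] at hβc
                exact hβc ▸ hβ
              have hAeqB : A = B := le_antisymm hAB hBA
              have hXYA : X ⊓ Y = A := by
                apply le_antisymm
                · rintro ξ ⟨hξX, hξY⟩
                  obtain ⟨α, hα, c, hαc⟩ := mem_sup_point.mp (hXA ▸ hξX : ξ ∈ A ⊔ span K {x₀})
                  obtain ⟨β, hβ, d, hβd⟩ := mem_sup_point.mp (hYB ▸ hξY : ξ ∈ B ⊔ span K {y₁})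
                  have e3 : (c - d) • x₀ = β + d • z₀ - α := by
                    rw [sub_smul, eq_sub_iff_add_eq]
                    have h9 : c • x₀ - d • x₀ + α = (α + c • x₀) - d • x₀ := by abel
                    rw [h9, hαc, ← hβd, hy₁, smul_add]
                    abel
                  have e4 : (c - d) • x₀ ∈ Z := by
                    rw [e3]
                    exact Z.sub_mem (Z.add_mem hβ.2 (Z.smul_mem d hz₀Z)) hα.2
                  have hcd : c = d := sub_eq_zero.mp (smul_mem_cases e4 hx₀Z)
                  have e5 : d • z₀ = α - β := by
                    rw [eq_sub_iff_add_eq]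
                    have h10 : d • z₀ + β = β + d • z₀ - α + α := by abel
                    rw [h10, ← e3, hcd, sub_self, zero_smul, zero_add]
                  have e6 : d • z₀ ∈ A ⊔ B := by
                    rw [e5]
                    exact Submodule.sub_mem _ (Submodule.mem_sup_left hα)
                      (Submodule.mem_sup_right hβ)
                  have hd0 : d = 0 := smul_mem_cases e6 hz₀AB
                  rw [hcd, hd0, zero_smul, add_zero] at hαc
                  exact hαc ▸ hα
                · exact le_inf (le_trans inf_le_left (le_refl _) : A ≤ X)
                    (hAeqB ▸ (inf_le_left : Y ⊓ Z ≤ Y) : A ≤ Y)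
              apply hnadj
              constructor
              · rw [hXYA]
                exact quotRank_eq_one inf_le_left hx₀X hx₀A hXA.le
              · rw [hXYA, hAeqB]
                exact quotRank_eq_one inf_le_left hy₁Y hy₁B hYB.le
            · -- use W containing y₁
              have hd : span K {y₁} ⊓ Z = ⊥ := by rw [inf_comm]; exact inf_point_eq_bot hy₁Z
              obtain ⟨W, hWG, hWc, hle⟩ := exists_compl_mem_grass hZ hd
              have hy₁W : y₁ ∈ W := hle (Submodule.mem_span_singleton_self y₁)
              refine ⟨W, hWG, hWc.symm, ?_, nondistant_of_mem hy₁0 hy₁W hy₁Y⟩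
              refine not_distant_aux hWc (sup_le hAZ
                ((Submodule.span_singleton_le_iff_mem _ _).mpr hz₀Z)) hAz ?_
              rw [hXA]
              apply sup_le
              · exact le_trans le_sup_left (le_sup_right : A ⊔ span K {z₀} ≤ _)
              · rw [Submodule.span_singleton_le_iff_mem]
                have : x₀ = y₁ - z₀ := by rw [hy₁]; abel
                rw [this]
                exact Submodule.sub_mem _ (Submodule.mem_sup_left hy₁W)
                  (Submodule.mem_sup_right (Submodule.mem_sup_right (Submodule.mem_span_singleton_self z₀)))
          · -- use W containing x₀
            have hd : span K {x₀} ⊓ Z = ⊥ := by rw [inf_comm]; exact inf_point_eq_bot hx₀Z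
            obtain ⟨W, hWG, hWc, hle⟩ := exists_compl_mem_grass hZ hd
            have hx₀W : x₀ ∈ W := hle (Submodule.mem_span_singleton_self x₀)
            refine ⟨W, hWG, hWc.symm, nondistant_of_mem hx₀0 hx₀W hx₀X, ?_⟩
            refine not_distant_aux hWc (sup_le hBZ
              ((Submodule.span_singleton_le_iff_mem _ _).mpr hz₀Z)) hBz ?_
            rw [hYB]
            apply sup_le
            · exact le_trans le_sup_left (le_sup_right : B ⊔ span K {z₀} ≤ _)
            · rw [Submodule.span_singleton_le_iff_mem]
              rw [hy₁]
              exact Submodule.add_mem _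
                (Submodule.mem_sup_right (Submodule.mem_sup_right (Submodule.mem_span_singleton_self z₀)))
                (Submodule.mem_sup_left hx₀W)

end PartD
section PartE

lemma adjChar_iff (hV : 2 < Module.rank K V) {X Y : Submodule K V}
    (hX : X ∈ Grass K V) (hY : Y ∈ Grass K V) : AdjChar X Y ↔ Adjacent X Y := by
  constructor
  · rintro ⟨hne, _, Z, hZ, hZX, hZY, hall⟩
    by_contra hnadj
    obtain ⟨W, hWG, hWZ, hWX, hWY⟩ := exists_bad_W hV hX hY hZ hne hnadj hZX hZY
    rcases hall W hWG hWZ with h | h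
    exacts [hWX h, hWY h]
  · exact adjacent_adjChar hV hX hY

/-- The key equivalence : for `W` adjacent to `E₀` and `E` a complement of `E₀`,
`W` is non-distant to `E` iff `W` meets `E`. -/
lemma nondistant_iff_meets {W E₀ E : Submodule K V} (hadj : Adjacent W E₀)
    (hD : Distant E₀ E) : ¬ Distant W E ↔ W ⊓ E ≠ ⊥ := by
  constructor
  · intro hnd
    by_contra hbot
    apply hnd
    refine ⟨disjoint_iff.mpr hbot, codisjoint_iff.mpr ?_⟩
    obtain ⟨h1, h2⟩ := hadj
    obtain ⟨p, hpW, hpM⟩ := quotRank_one_exists h1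
    have hW : W = (W ⊓ E₀) ⊔ span K {p} := quotRank_one_gen inf_le_left h1 hpW hpM
    obtain ⟨q, hqE₀, hqM⟩ := quotRank_one_exists h2
    have hE₀ : E₀ = (W ⊓ E₀) ⊔ span K {q} := quotRank_one_gen inf_le_right h2 hqE₀ hqM
    set M := W ⊓ E₀ with hM
    set U := M ⊔ E with hU
    have hUtop : U ⊔ span K {q} = ⊤ := by
      have h3 : U ⊔ span K {q} = (M ⊔ span K {q}) ⊔ E := by
        rw [hU, sup_right_comm]
      rw [h3, ← hE₀]
      exact codisjoint_iff.mp hD.codisjoint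
    have hWE : W ⊔ E = U ⊔ span K {p} := by
      rw [hU, sup_right_comm, ← hW]
    by_cases hpU : p ∈ U
    · exfalso
      obtain ⟨m, hm, e, he, hme⟩ := Submodule.mem_sup.mp hpU
      have heWE : e ∈ W ⊓ E := by
        refine ⟨?_, he⟩
        have : e = p - m := by rw [← hme]; abel
        rw [this]
        exact W.sub_mem hpW (hm.1)
      rw [hbot] at heWE
      rw [Submodule.mem_bot] at heWE
      rw [heWE, add_zero] at hme
      exact hpM (hme ▸ hm)
    · rw [hWE, eq_top_iff, ← hUtop]
      refine sup_le le_sup_left ?_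
      rw [Submodule.span_singleton_le_iff_mem]
      have hp2 : p ∈ U ⊔ span K {q} := by rw [hUtop]; trivial
      obtain ⟨u, hu, c, huc⟩ := mem_sup_point.mp hp2
      have hc0 : c ≠ 0 := by
        rintro rfl
        rw [zero_smul, add_zero] at huc
        exact hpU (huc ▸ hu)
      have hq' : q = c⁻¹ • (p - u) := by
        rw [← huc, add_sub_cancel_left, smul_smul, inv_mul_cancel₀ hc0, one_smul]
      rw [hq']
      exact Submodule.smul_mem _ _ (Submodule.sub_mem _
        (Submodule.mem_sup_right (Submodule.mem_span_singleton_self p))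
        (Submodule.mem_sup_left hu))
  · intro h hd
    exact h (disjoint_iff.mp hd.disjoint)

/-- Existence of a hyperplane of `E₀` through `q` avoiding `m`. -/
lemma exists_hyperplane_through {E₀ : Submodule K V} {q m : V} (hq : q ∈ E₀) (hm : m ∈ E₀)
    (hind : m ∉ span K {q}) :
    ∃ M : Submodule K V, M ≤ E₀ ∧ q ∈ M ∧ m ∉ M ∧ quotRank M E₀ = 1 := by
  set qe : ↥E₀ := ⟨q, hq⟩ with hqe
  set me : ↥E₀ := ⟨m, hm⟩ with hme
  set T : Submodule K ↥E₀ := span K {qe} ⊔ span K {me} with hT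
  obtain ⟨C, hC⟩ := Submodule.exists_isCompl T
  set M₀ : Submodule K ↥E₀ := span K {qe} ⊔ C with hM₀
  have hCT : C ⊓ T = ⊥ := by rw [inf_comm]; exact disjoint_iff.mp hC.disjoint
  have hmeM₀ : me ∉ M₀ := by
    intro hmem
    obtain ⟨p', hp', u, hu, hpu⟩ := Submodule.mem_sup.mp hmem
    obtain ⟨c, rfl⟩ := Submodule.mem_span_singleton.mp hp'
    have huT : u ∈ C ⊓ T := by
      refine ⟨hu, ?_⟩
      have : u = me - c • qe := by rw [← hpu]; abel
      rw [this]
      exact T.sub_mem (Submodule.mem_sup_right (Submodule.mem_span_singleton_self me))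
        (T.smul_mem c (Submodule.mem_sup_left (Submodule.mem_span_singleton_self qe)))
    rw [hCT] at huT
    rw [Submodule.mem_bot] at huT
    rw [huT, add_zero] at hpu
    apply hind
    have : m = c • q := by
      have := congrArg (Subtype.val) hpu
      simpa [hqe, hme] using this.symm
    rw [this]
    exact Submodule.smul_mem _ _ (Submodule.mem_span_singleton_self q)
  have hM₀top : M₀ ⊔ span K {me} = ⊤ := by
    rw [hM₀, sup_right_comm, ← hT]
    exact codisjoint_iff.mp hC.codisjoint
  refine ⟨M₀.map E₀.subtype, Submodule.map_subtype_le _ _, ?_, ?_, ?_⟩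
  · exact ⟨qe, Submodule.mem_sup_left (Submodule.mem_span_singleton_self qe), rfl⟩
  · rintro ⟨x, hx, hxm⟩
    have : x = me := Subtype.ext hxm
    rw [this] at hx
    exact hmeM₀ hx
  · refine quotRank_eq_one (Submodule.map_subtype_le _ _) hm ?_ ?_
    · rintro ⟨x, hx, hxm⟩
      exact hmeM₀ ((Subtype.ext hxm : x = me) ▸ hx)
    · intro x hx
      have hxe : (⟨x, hx⟩ : ↥E₀) ∈ M₀ ⊔ span K {me} := by rw [hM₀top]; trivial
      obtain ⟨u, hu, c, huc⟩ := mem_sup_point.mp hxe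
      have : x = (u : V) + c • m := by
        have := congrArg (Subtype.val) huc
        simpa [hme] using this.symm
      rw [this]
      exact Submodule.add_mem _ (Submodule.mem_sup_left ⟨u, hu, rfl⟩)
        (Submodule.mem_sup_right (Submodule.smul_mem _ _ (Submodule.mem_span_singleton_self m)))

/-- If `X' = M ⊔ Kr ∈ 𝒢` and `w ∉ X'` then `M ⊔ Kw ∈ 𝒢`. -/
lemma grass_of_sup_point {M X' : Submodule K V} {r w : V} (hX' : X' ∈ Grass K V)
    (hXM : X' = M ⊔ span K {r}) (hrM : r ∉ M) (hwX : w ∉ X') :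
    M ⊔ span K {w} ∈ Grass K V := by
  have hMX : M ≤ X' := hXM ▸ le_sup_left
  have hwM : w ∉ M := fun h => hwX (hMX h)
  have hrX : r ∈ X' := hXM ▸ Submodule.mem_sup_right (Submodule.mem_span_singleton_self r)
  have hr0 : r ≠ 0 := fun h => hrM (h ▸ M.zero_mem)
  have hw0 : w ≠ 0 := fun h => hwX (h ▸ X'.zero_mem)
  set T := X' ⊔ span K {w} with hT
  obtain ⟨C, hC⟩ := Submodule.exists_isCompl T
  have hCT : C ⊓ T = ⊥ := by rw [inf_comm]; exact disjoint_iff.mp hC.disjoint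
  have hwT : w ∈ T := Submodule.mem_sup_right (Submodule.mem_span_singleton_self w)
  have hrT : r ∈ T := Submodule.mem_sup_left hrX
  have hrC : r ∉ C := fun h => hr0 (by
    have : r ∈ C ⊓ T := ⟨h, hrT⟩
    rwa [hCT, Submodule.mem_bot] at this)
  have hwC : w ∉ C := fun h => hw0 (by
    have : w ∈ C ⊓ T := ⟨h, hwT⟩
    rwa [hCT, Submodule.mem_bot] at this)
  have hc1 : IsCompl (M ⊔ span K {w}) (C ⊔ span K {r}) := by
    constructor
    · rw [disjoint_iff, eq_bot_iff]
      rintro x ⟨hx1, hx2⟩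
      obtain ⟨m, hm, s, hms⟩ := mem_sup_point.mp hx1
      obtain ⟨c, hcC, t, hct⟩ := mem_sup_point.mp hx2
      have hxT : x ∈ T := by
        rw [← hms]
        exact T.add_mem (Submodule.mem_sup_left (hMX hm)) (T.smul_mem s hwT)
      have hcT : c ∈ T := by
        have hc : c = x - t • r := by rw [← hct]; abel
        rw [hc]; exact T.sub_mem hxT (T.smul_mem t hrT)
      have hc0 : c = 0 := by
        have : c ∈ C ⊓ T := ⟨hcC, hcT⟩
        rw [hCT] at this; exact this
      have hxr : x = t • r := by rw [← hct, hc0, zero_add]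
      have hsw : s • w = t • r - m := by
        rw [eq_sub_iff_add_eq]
        have h8 : s • w + m = m + s • w := by abel
        rw [h8, hms, hxr]
      have hswX : s • w ∈ X' := by
        rw [hsw]
        exact X'.sub_mem (X'.smul_mem t hrX) (hMX hm)
      have hs0 : s = 0 := smul_mem_cases hswX hwX
      have hxm : x = m := by rw [← hms, hs0, zero_smul, add_zero]
      have htrM : t • r ∈ M := by rw [← hxr, hxm]; exact hm
      have ht0 : t = 0 := smul_mem_cases htrM hrM
      rw [Submodule.mem_bot, hxr, ht0, zero_smul]
    · rw [codisjoint_iff, eq_top_iff, ← codisjoint_iff.mp hC.codisjoint]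
      apply sup_le
      · rw [hT]
        apply sup_le
        · rw [hXM]
          apply sup_le
          · exact le_trans le_sup_left le_sup_left
          · exact le_trans le_sup_right le_sup_right
        · exact le_trans le_sup_right le_sup_left
      · exact le_trans le_sup_left le_sup_right
  have hc2 : IsCompl X' (C ⊔ span K {w}) := by
    constructor
    · rw [disjoint_iff, eq_bot_iff]
      rintro x ⟨hx1, hx2⟩
      obtain ⟨c, hcC, t, hct⟩ := mem_sup_point.mp hx2
      have hcT : c ∈ T := by
        have hc : c = x - t • w := by rw [← hct]; abel
        rw [hc]
        exact T.sub_mem (Submodule.mem_sup_left hx1) (T.smul_mem t hwT)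
      have hc0 : c = 0 := by
        have : c ∈ C ⊓ T := ⟨hcC, hcT⟩
        rw [hCT] at this; exact this
      have hxw : x = t • w := by rw [← hct, hc0, zero_add]
      have ht0 : t = 0 := smul_mem_cases (hxw ▸ hx1) hwX
      rw [Submodule.mem_bot, hxw, ht0, zero_smul]
    · rw [codisjoint_iff, eq_top_iff, ← codisjoint_iff.mp hC.codisjoint]
      apply sup_le
      · rw [hT]
        apply sup_le
        · exact le_sup_left
        · exact le_trans le_sup_right le_sup_right
      · exact le_trans le_sup_left le_sup_right
  obtain ⟨eX⟩ := hX'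
  obtain ⟨e1⟩ : Nonempty (↥(M ⊔ span K {w}) ≃ₗ[K] ↥X') := by
    rw [hXM]
    exact nonempty_equiv_sup_point hwM hrM
  have e2 := Submodule.quotientEquivOfIsCompl (M ⊔ span K {w}) (C ⊔ span K {r}) hc1
  have e3 := Submodule.quotientEquivOfIsCompl X' (C ⊔ span K {w}) hc2
  obtain ⟨e4⟩ := nonempty_equiv_sup_point hwC hrC
  exact ⟨e1.trans (eX.trans (e3.trans (e4.trans e2.symm)))⟩

end PartE
section PartF

lemma pair_indep {E₁ E₂ : Submodule K V} {q₁ q₂ : V} (hq₁ : q₁ ∈ E₁) (hq₂ : q₂ ∈ E₂)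
    (h10 : q₁ ≠ 0) (h20 : q₂ ≠ 0) (hD : Distant E₁ E₂) :
    LinearIndependent K ((↑) : ({q₁, q₂} : Set V) → V) := by
  refine linearIndepOn_id_pair h10 ?_
  intro a ha
  apply h20
  have : q₂ ∈ E₁ ⊓ E₂ := ⟨ha ▸ E₁.smul_mem a hq₁, hq₂⟩
  rwa [disjoint_iff.mp hD.disjoint, Submodule.mem_bot] at this

lemma pair_ne {E₁ E₂ : Submodule K V} {q₁ q₂ : V} (hq₁ : q₁ ∈ E₁) (hq₂ : q₂ ∈ E₂)
    (h10 : q₁ ≠ 0) (hD : Distant E₁ E₂) : q₁ ≠ q₂ := by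
  rintro rfl
  apply h10
  have : q₁ ∈ E₁ ⊓ E₂ := ⟨hq₁, hq₂⟩
  rwa [disjoint_iff.mp hD.disjoint, Submodule.mem_bot] at this

lemma me3_to_box (hV : 2 < Module.rank K V) {R : Set (Submodule K V)}
    (hcl : IsDistantClique R) (hme : MeetsThreeMeetsAll R) : BoxTwo R := by
  intro E₀ hE₀ E₁ hE₁ E₂ hE₂ h01 h02 h12 W hWG hadj hnd1 hnd2 E hE
  have hG0 : E₀ ∈ Grass K V := hcl.1 hE₀
  by_cases hEeq0 : E = E₀
  · subst hEeq0
    intro hd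
    have hb : W ⊓ E = ⊥ := disjoint_iff.mp hd.disjoint
    have h2 := hadj.2
    rw [hb, quotRank_bot_eq] at h2
    exact (grass_one_lt_rank hV hG0).ne' h2
  · by_cases hEeq1 : E = E₁
    · subst hEeq1; exact hnd1
    by_cases hEeq2 : E = E₂
    · subst hEeq2; exact hnd2
    have D01 : Distant E₀ E₁ := hcl.2 hE₀ hE₁ h01
    have D02 : Distant E₀ E₂ := hcl.2 hE₀ hE₂ h02
    have D12 : Distant E₁ E₂ := hcl.2 hE₁ hE₂ h12
    have D0E : Distant E₀ E := hcl.2 hE₀ hE (Ne.symm hEeq0)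
    obtain ⟨q₁, hq₁, hq₁0⟩ := (Submodule.ne_bot_iff _).mp ((nondistant_iff_meets hadj D01).mp hnd1)
    obtain ⟨q₂, hq₂, hq₂0⟩ := (Submodule.ne_bot_iff _).mp ((nondistant_iff_meets hadj D02).mp hnd2)
    obtain ⟨p, hpW, hpM⟩ := quotRank_one_exists hadj.1
    have hW : W = (W ⊓ E₀) ⊔ span K {p} := quotRank_one_gen inf_le_left hadj.1 hpW hpM
    -- decompose q₁ and q₂
    obtain ⟨m₁, hm₁, l₁, hl₁⟩ := mem_sup_point.mp (hW ▸ hq₁.1 : q₁ ∈ (W ⊓ E₀) ⊔ span K {p})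
    obtain ⟨m₂, hm₂, l₂, hl₂⟩ := mem_sup_point.mp (hW ▸ hq₂.1 : q₂ ∈ (W ⊓ E₀) ⊔ span K {p})
    have hl₁0 : l₁ ≠ 0 := by
      rintro rfl
      rw [zero_smul, add_zero] at hl₁
      apply hq₁0
      have : q₁ ∈ E₀ ⊓ E₁ := ⟨hl₁ ▸ hm₁.2, hq₁.2⟩
      rwa [disjoint_iff.mp D01.disjoint, Submodule.mem_bot] at this
    have hl₂0 : l₂ ≠ 0 := by
      rintro rfl
      rw [zero_smul, add_zero] at hl₂
      apply hq₂0
      have : q₂ ∈ E₀ ⊓ E₂ := ⟨hl₂ ▸ hm₂.2, hq₂.2⟩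
      rwa [disjoint_iff.mp D02.disjoint, Submodule.mem_bot] at this
    have e1 : l₁⁻¹ • q₁ = l₁⁻¹ • m₁ + p := by
      rw [← hl₁, smul_add, smul_smul, inv_mul_cancel₀ hl₁0, one_smul]
    have e2 : l₂⁻¹ • q₂ = l₂⁻¹ • m₂ + p := by
      rw [← hl₂, smul_add, smul_smul, inv_mul_cancel₀ hl₂0, one_smul]
    set ξ := l₁⁻¹ • q₁ - l₂⁻¹ • q₂ with hξ
    have hξM : ξ ∈ W ⊓ E₀ := by
      have : ξ = l₁⁻¹ • m₁ - l₂⁻¹ • m₂ := by rw [hξ, e1, e2]; abel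
      rw [this]
      exact Submodule.sub_mem _ ((W ⊓ E₀).smul_mem _ hm₁) ((W ⊓ E₀).smul_mem _ hm₂)
    have hξ0 : ξ ≠ 0 := by
      intro h0
      have hqq : l₁⁻¹ • q₁ = l₂⁻¹ • q₂ := by
        rw [hξ] at h0
        exact sub_eq_zero.mp h0
      have : l₁⁻¹ • q₁ ∈ E₁ ⊓ E₂ := ⟨E₁.smul_mem _ hq₁.2, hqq ▸ E₂.smul_mem _ hq₂.2⟩
      rw [disjoint_iff.mp D12.disjoint, Submodule.mem_bot] at this
      apply hq₁0
      have : q₁ = l₁ • (l₁⁻¹ • q₁) := by rw [smul_smul, mul_inv_cancel₀ hl₁0, one_smul]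
      rw [this, ‹l₁⁻¹ • q₁ = 0›, smul_zero]
    set L := span K ({q₁, q₂} : Set V) with hL
    have hLine : IsLine L := by
      have hli := pair_indep hq₁.2 hq₂.2 hq₁0 hq₂0 D12
      have := rank_span_set hli
      rw [IsLine, hL, this, Cardinal.mk_insert (by
        simpa using pair_ne hq₁.2 hq₂.2 hq₁0 D12), Cardinal.mk_singleton]
      norm_num
    have hq₁L : q₁ ∈ L := Submodule.subset_span (by simp)
    have hq₂L : q₂ ∈ L := Submodule.subset_span (by simp)
    have hξL : ξ ∈ L := Submodule.sub_mem _ (L.smul_mem _ hq₁L) (L.smul_mem _ hq₂L)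
    have hmeet : ∀ E' ∈ R, Meets L E' := by
      refine hme L hLine E₀ hE₀ E₁ hE₁ E₂ hE₂ h01 h02 h12 ?_ ?_ ?_
      · exact (Submodule.ne_bot_iff _).mpr ⟨ξ, ⟨hξL, hξM.2⟩, hξ0⟩
      · exact (Submodule.ne_bot_iff _).mpr ⟨q₁, ⟨hq₁L, hq₁.2⟩, hq₁0⟩
      · exact (Submodule.ne_bot_iff _).mpr ⟨q₂, ⟨hq₂L, hq₂.2⟩, hq₂0⟩
    have hLW : L ≤ W := by
      rw [hL]
      rw [Submodule.span_le]
      rintro x (rfl | rfl)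
      · exact hq₁.1
      · exact hq₂.1
    refine (nondistant_iff_meets hadj D0E).mpr ?_
    obtain ⟨x, hx, hx0⟩ := (Submodule.ne_bot_iff _).mp (hmeet E hE)
    exact (Submodule.ne_bot_iff _).mpr ⟨x, ⟨hLW hx.1, hx.2⟩, hx0⟩

end PartF
section PartG

lemma box_to_me3 (hV : 2 < Module.rank K V) {R : Set (Submodule K V)}
    (hcl : IsDistantClique R) (hbox : BoxTwo R) : MeetsThreeMeetsAll R := by
  intro L hLine E₀ hE₀ E₁ hE₁ E₂ hE₂ h01 h02 h12 m0 m1 m2 E hE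
  by_cases hEeq0 : E = E₀
  · subst hEeq0; exact m0
  by_cases hEeq1 : E = E₁
  · subst hEeq1; exact m1
  by_cases hEeq2 : E = E₂
  · subst hEeq2; exact m2
  have hG0 : E₀ ∈ Grass K V := hcl.1 hE₀
  have D01 : Distant E₀ E₁ := hcl.2 hE₀ hE₁ h01
  have D02 : Distant E₀ E₂ := hcl.2 hE₀ hE₂ h02
  have D12 : Distant E₁ E₂ := hcl.2 hE₁ hE₂ h12
  have D0E : Distant E₀ E := hcl.2 hE₀ hE (Ne.symm hEeq0)
  obtain ⟨q₀, hq₀, hq₀0⟩ := (Submodule.ne_bot_iff _).mp m0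
  obtain ⟨q₁, hq₁, hq₁0⟩ := (Submodule.ne_bot_iff _).mp m1
  obtain ⟨q₂, hq₂, hq₂0⟩ := (Submodule.ne_bot_iff _).mp m2
  -- q₀ lies in the span of q₁, q₂
  have hq₀span : q₀ ∈ span K ({q₁, q₂} : Set V) := by
    by_contra hnot
    have hq₀nm : q₀ ∉ ({q₁, q₂} : Set V) := by
      rintro (rfl | rfl)
      · exact pair_ne hq₀.2 hq₁.2 hq₀0 D01 rfl
      · exact pair_ne hq₀.2 hq₂.2 hq₀0 D02 rfl
    have hli3 : LinearIndependent K ((↑) : (insert q₀ {q₁, q₂} : Set V) → V) :=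
      (linearIndepOn_id_insert hq₀nm).mpr ⟨pair_indep hq₁.2 hq₂.2 hq₁0 hq₂0 D12, hnot⟩
    have hrank3 := rank_span_set hli3
    have hle : span K (insert q₀ {q₁, q₂} : Set V) ≤ L := by
      rw [Submodule.span_le]
      rintro x (rfl | rfl | rfl)
      · exact hq₀.1
      · exact hq₁.1
      · exact hq₂.1
    have hcard : #(insert q₀ {q₁, q₂} : Set V) = 3 := by
      rw [Cardinal.mk_insert hq₀nm,
        Cardinal.mk_insert (by simpa using pair_ne hq₁.2 hq₂.2 hq₁0 D12),
        Cardinal.mk_singleton]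
      norm_num
    have h3 : (3 : Cardinal) ≤ 2 := by
      calc (3 : Cardinal) = #(insert q₀ {q₁, q₂} : Set V) := hcard.symm
      _ = Module.rank K (span K (insert q₀ {q₁, q₂} : Set V)) := hrank3.symm
      _ ≤ Module.rank K L := Submodule.rank_mono hle
      _ = 2 := hLine
    norm_num at h3
  obtain ⟨α, β, hαβ⟩ := Submodule.mem_span_pair.mp hq₀span
  have hα0 : α ≠ 0 := by
    rintro rfl
    rw [zero_smul, zero_add] at hαβ
    apply hq₀0
    have : q₀ ∈ E₀ ⊓ E₂ := ⟨hq₀.2, hαβ ▸ E₂.smul_mem β hq₂.2⟩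
    rwa [disjoint_iff.mp D02.disjoint, Submodule.mem_bot] at this
  have hβ0 : β ≠ 0 := by
    rintro rfl
    rw [zero_smul, add_zero] at hαβ
    apply hq₀0
    have : q₀ ∈ E₀ ⊓ E₁ := ⟨hq₀.2, hαβ ▸ E₁.smul_mem α hq₁.2⟩
    rwa [disjoint_iff.mp D01.disjoint, Submodule.mem_bot] at this
  set q₁' := α • q₁ with hq₁'def
  set q₂' := β • q₂ with hq₂'def
  have hq₁'E₁ : q₁' ∈ E₁ := E₁.smul_mem α hq₁.2
  have hq₂'E₂ : q₂' ∈ E₂ := E₂.smul_mem β hq₂.2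
  have hq₁'L : q₁' ∈ L := L.smul_mem α hq₁.1
  have hq₂'L : q₂' ∈ L := L.smul_mem β hq₂.1
  have hq₁'0 : q₁' ≠ 0 := by
    intro h
    apply hq₁0
    have : q₁ = α⁻¹ • q₁' := by rw [hq₁'def, smul_smul, inv_mul_cancel₀ hα0, one_smul]
    rw [this, h, smul_zero]
  have hq₂'0 : q₂' ≠ 0 := by
    intro h
    apply hq₂0
    have : q₂ = β⁻¹ • q₂' := by rw [hq₂'def, smul_smul, inv_mul_cancel₀ hβ0, one_smul]
    rw [this, h, smul_zero]
  have hq₀sum : q₀ = q₁' + q₂' := hαβ.symm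
  have hq₁'E₀ : q₁' ∉ E₀ := by
    intro h
    apply hq₁'0
    have : q₁' ∈ E₀ ⊓ E₁ := ⟨h, hq₁'E₁⟩
    rwa [disjoint_iff.mp D01.disjoint, Submodule.mem_bot] at this
  -- the key construction for a hyperplane of E₀ through q₀
  have key : ∀ M : Submodule K V, M ≤ E₀ → q₀ ∈ M → quotRank M E₀ = 1 →
      ∃ μ ∈ M, μ + q₁' ∈ E := by
    intro M hMle hq₀M hqr1
    set W := M ⊔ span K {q₁'} with hWdef
    have hq₁'W : q₁' ∈ W := Submodule.mem_sup_right (Submodule.mem_span_singleton_self q₁')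
    have hq₁'M : q₁' ∉ M := fun h => hq₁'E₀ (hMle h)
    have hWE₀ : W ⊓ E₀ = M := by
      apply le_antisymm
      · rintro x ⟨hx1, hx2⟩
        obtain ⟨μ, hμ, c, hμc⟩ := mem_sup_point.mp hx1
        have hcq : c • q₁' ∈ E₀ := by
          have : c • q₁' = x - μ := by rw [← hμc]; abel
          rw [this]
          exact E₀.sub_mem hx2 (hMle hμ)
        have hc0 : c = 0 := smul_mem_cases hcq hq₁'E₀
        rw [hc0, zero_smul, add_zero] at hμc
        exact hμc ▸ hμ
      · exact le_inf le_sup_left hMle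
    have hadjW : Adjacent W E₀ := by
      constructor
      · rw [hWE₀]
        exact quotRank_eq_one le_sup_left hq₁'W hq₁'M (le_refl _)
      · rw [hWE₀]
        exact hqr1
    have hWG : W ∈ Grass K V := by
      obtain ⟨r, hrE₀, hrM⟩ := quotRank_one_exists hqr1
      have hE₀r : E₀ = M ⊔ span K {r} := quotRank_one_gen hMle hqr1 hrE₀ hrM
      exact grass_of_sup_point hG0 hE₀r hrM hq₁'E₀
    have hnd1 : ¬ Distant W E₁ := nondistant_of_mem hq₁'0 hq₁'W hq₁'E₁
    have hq₂'W : q₂' ∈ W := by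
      have : q₂' = q₀ - q₁' := by rw [hq₀sum]; abel
      rw [this]
      exact W.sub_mem (Submodule.mem_sup_left hq₀M) hq₁'W
    have hnd2 : ¬ Distant W E₂ := nondistant_of_mem hq₂'0 hq₂'W hq₂'E₂
    have hndE : ¬ Distant W E :=
      hbox E₀ hE₀ E₁ hE₁ E₂ hE₂ h01 h02 h12 W hWG hadjW hnd1 hnd2 E hE
    obtain ⟨e, he, he0⟩ := (Submodule.ne_bot_iff _).mp
      ((nondistant_iff_meets hadjW D0E).mp hndE)
    obtain ⟨μ, hμ, c, hμc⟩ := mem_sup_point.mp he.1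
    have hc0 : c ≠ 0 := by
      rintro rfl
      rw [zero_smul, add_zero] at hμc
      apply he0
      have : e ∈ E₀ ⊓ E := ⟨hμc ▸ hMle hμ, he.2⟩
      rwa [disjoint_iff.mp D0E.disjoint, Submodule.mem_bot] at this
    refine ⟨c⁻¹ • μ, M.smul_mem _ hμ, ?_⟩
    have : c⁻¹ • μ + q₁' = c⁻¹ • e := by
      rw [← hμc, smul_add, smul_smul, inv_mul_cancel₀ hc0, one_smul]
    rw [this]
    exact E.smul_mem _ he.2
  -- choose the first hyperplane
  have hrankE₀ := grass_one_lt_rank hV hG0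
  have hnotle : ¬ E₀ ≤ span K {q₀} := by
    intro hle
    have := le_trans (Submodule.rank_mono hle) (rank_le_one_span q₀)
    exact absurd hrankE₀ (not_lt.mpr this)
  obtain ⟨m', hm'E₀, hm'sp⟩ := SetLike.not_le_iff_exists.mp hnotle
  obtain ⟨M₁, hM₁le, hq₀M₁, -, hM₁r⟩ := exists_hyperplane_through hq₀.2 hm'E₀ hm'sp
  obtain ⟨μ₁, hμ₁M₁, hu₁⟩ := key M₁ hM₁le hq₀M₁ hM₁r
  by_cases hμsp : μ₁ ∈ span K {q₀}
  · obtain ⟨c, hc⟩ := Submodule.mem_span_singleton.mp hμsp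
    have hξL : μ₁ + q₁' ∈ L := by
      refine L.add_mem ?_ hq₁'L
      rw [← hc]
      exact L.smul_mem c hq₀.1
    have hξ0 : μ₁ + q₁' ≠ 0 := by
      intro h
      apply hq₁'E₀
      have : q₁' = -μ₁ := by
        rw [eq_neg_iff_add_eq_zero, add_comm]
        exact h
      rw [this]
      exact E₀.neg_mem (hM₁le hμ₁M₁)
    exact (Submodule.ne_bot_iff _).mpr ⟨μ₁ + q₁', ⟨hξL, hu₁⟩, hξ0⟩
  · exfalso
    obtain ⟨M₂, hM₂le, hq₀M₂, hμ₁M₂, hM₂r⟩ :=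
      exists_hyperplane_through hq₀.2 (hM₁le hμ₁M₁) hμsp
    obtain ⟨μ₂, hμ₂M₂, hu₂⟩ := key M₂ hM₂le hq₀M₂ hM₂r
    have hdiff : μ₁ - μ₂ ∈ E₀ ⊓ E := by
      refine ⟨E₀.sub_mem (hM₁le hμ₁M₁) (hM₂le hμ₂M₂), ?_⟩
      have : μ₁ - μ₂ = (μ₁ + q₁') - (μ₂ + q₁') := by abel
      rw [this]
      exact E.sub_mem hu₁ hu₂
    rw [disjoint_iff.mp D0E.disjoint, Submodule.mem_bot, sub_eq_zero] at hdiff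
    exact hμ₁M₂ (hdiff ▸ hμ₂M₂)

end PartG
section PartH

/-- The distant-graph version of condition (⊠2). -/
def BoxStar (R : Set (Submodule K V)) : Prop :=
  ∀ E₀ ∈ R, ∀ E₁ ∈ R, ∀ E₂ ∈ R, E₀ ≠ E₁ → E₀ ≠ E₂ → E₁ ≠ E₂ →
    ∀ W ∈ Grass K V, AdjChar W E₀ → ¬ Distant W E₁ → ¬ Distant W E₂ →
      ∀ E ∈ R, ¬ Distant W E

lemma boxStar_iff_boxTwo (hV : 2 < Module.rank K V) {R : Set (Submodule K V)}
    (hR : R ⊆ Grass K V) : BoxStar R ↔ BoxTwo R := by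
  constructor
  · intro h E₀ hE₀ E₁ hE₁ E₂ hE₂ h01 h02 h12 W hWG hadj
    exact h E₀ hE₀ E₁ hE₁ E₂ hE₂ h01 h02 h12 W hWG
      ((adjChar_iff hV hWG (hR hE₀)).mpr hadj)
  · intro h E₀ hE₀ E₁ hE₁ E₂ hE₂ h01 h02 h12 W hWG hadj
    exact h E₀ hE₀ E₁ hE₁ E₂ hE₂ h01 h02 h12 W hWG
      ((adjChar_iff hV hWG (hR hE₀)).mp hadj)

lemma partial_iff_phi (hV : 2 < Module.rank K V) {R : Set (Submodule K V)} :
    IsPartialZRegulus R ↔ (IsDistantClique R ∧ HasThree R) ∧ BoxStar R := by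
  constructor
  · rintro ⟨⟨hcl, h3⟩, hme⟩
    exact ⟨⟨hcl, h3⟩, (boxStar_iff_boxTwo hV hcl.1).mpr (me3_to_box hV hcl hme)⟩
  · rintro ⟨⟨hcl, h3⟩, hbs⟩
    exact ⟨⟨hcl, h3⟩, box_to_me3 hV hcl ((boxStar_iff_boxTwo hV hcl.1).mp hbs)⟩

variable {g : Submodule K V → Submodule K V}

lemma adjChar_image (hg : Set.BijOn g (Grass K V) (Grass K V))
    (hgd : ∀ X ∈ Grass K V, ∀ Y ∈ Grass K V, (Distant X Y ↔ Distant (g X) (g Y)))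
    {W E : Submodule K V} (hW : W ∈ Grass K V) (hE : E ∈ Grass K V)
    (h : AdjChar W E) : AdjChar (g W) (g E) := by
  obtain ⟨hne, hnd, Z, hZ, hZW, hZE, hall⟩ := h
  refine ⟨hg.injOn.ne hW hE hne, fun hd => hnd ((hgd W hW E hE).mpr hd),
    g Z, hg.mapsTo hZ, hg.injOn.ne hZ hW hZW, hg.injOn.ne hZ hE hZE, ?_⟩
  intro W' hW' hd
  obtain ⟨W₀, hW₀, rfl⟩ := hg.surjOn hW'
  rcases hall W₀ hW₀ ((hgd W₀ hW₀ Z hZ).mpr hd) with h | h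
  · exact Or.inl ((hgd W₀ hW₀ W hW).mp h)
  · exact Or.inr ((hgd W₀ hW₀ E hE).mp h)

/-- A distant-preserving bijection has a distant-preserving inverse. -/
lemma exists_inverse (hg : Set.BijOn g (Grass K V) (Grass K V))
    (hgd : ∀ X ∈ Grass K V, ∀ Y ∈ Grass K V, (Distant X Y ↔ Distant (g X) (g Y))) :
    ∃ g' : Submodule K V → Submodule K V,
      Set.BijOn g' (Grass K V) (Grass K V) ∧
      (∀ X ∈ Grass K V, ∀ Y ∈ Grass K V, (Distant X Y ↔ Distant (g' X) (g' Y))) ∧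
      (∀ X ∈ Grass K V, g' (g X) = X) ∧ (∀ X ∈ Grass K V, g (g' X) = X) := by
  set g' := Function.invFunOn g (Grass K V) with hg'
  have hinv := hg.invOn_invFunOn
  have hbij : Set.BijOn g' (Grass K V) (Grass K V) := Set.BijOn.symm hinv.symm hg
  have hleft : ∀ X ∈ Grass K V, g' (g X) = X := fun X hX => hinv.1 hX
  have hright : ∀ X ∈ Grass K V, g (g' X) = X := fun X hX => hinv.2 hX
  refine ⟨g', hbij, ?_, hleft, hright⟩
  intro X hX Y hY
  have hX' : g' X ∈ Grass K V := hbij.mapsTo hX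
  have hY' : g' Y ∈ Grass K V := hbij.mapsTo hY
  have := hgd (g' X) hX' (g' Y) hY'
  rw [hright X hX, hright Y hY] at this
  exact this.symm

lemma phi_image (hg : Set.BijOn g (Grass K V) (Grass K V))
    (hgd : ∀ X ∈ Grass K V, ∀ Y ∈ Grass K V, (Distant X Y ↔ Distant (g X) (g Y)))
    {R : Set (Submodule K V)} (hR : R ⊆ Grass K V)
    (h : (IsDistantClique R ∧ HasThree R) ∧ BoxStar R) :
    (IsDistantClique (g '' R) ∧ HasThree (g '' R)) ∧ BoxStar (g '' R) := by
  obtain ⟨⟨hcl, h3⟩, hbs⟩ := h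
  obtain ⟨g', hg'bij, hg'd, hleft, hright⟩ := exists_inverse hg hgd
  have himG : g '' R ⊆ Grass K V := by
    rintro _ ⟨A, hA, rfl⟩
    exact hg.mapsTo (hR hA)
  refine ⟨⟨⟨himG, ?_⟩, ?_⟩, ?_⟩
  · rintro _ ⟨A, hA, rfl⟩ _ ⟨B, hB, rfl⟩ hne
    have hAB : A ≠ B := fun he => hne (he ▸ rfl)
    exact (hgd A (hR hA) B (hR hB)).mp (hcl.2 hA hB hAB)
  · obtain ⟨A, hA, B, hB, C, hC, hAB, hAC, hBC⟩ := h3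
    exact ⟨g A, ⟨A, hA, rfl⟩, g B, ⟨B, hB, rfl⟩, g C, ⟨C, hC, rfl⟩,
      hg.injOn.ne (hR hA) (hR hB) hAB, hg.injOn.ne (hR hA) (hR hC) hAC,
      hg.injOn.ne (hR hB) (hR hC) hBC⟩
  · rintro _ ⟨E₀, hE₀, rfl⟩ _ ⟨E₁, hE₁, rfl⟩ _ ⟨E₂, hE₂, rfl⟩ h01 h02 h12 W' hW'G hadj hnd1 hnd2
    have h01' : E₀ ≠ E₁ := fun he => h01 (he ▸ rfl)
    have h02' : E₀ ≠ E₂ := fun he => h02 (he ▸ rfl)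
    have h12' : E₁ ≠ E₂ := fun he => h12 (he ▸ rfl)
    obtain ⟨W, hWG, rfl⟩ := hg.surjOn hW'G
    have hadjW : AdjChar W E₀ := by
      have := adjChar_image hg'bij hg'd (hg.mapsTo hWG) (hg.mapsTo (hR hE₀)) hadj
      rwa [hleft W hWG, hleft E₀ (hR hE₀)] at this
    have hnd1' : ¬ Distant W E₁ := fun hd => hnd1 ((hgd W hWG E₁ (hR hE₁)).mp hd)
    have hnd2' : ¬ Distant W E₂ := fun hd => hnd2 ((hgd W hWG E₂ (hR hE₂)).mp hd)
    rintro _ ⟨E, hE, rfl⟩ hd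
    exact hbs E₀ hE₀ E₁ hE₁ E₂ hE₂ h01' h02' h12' W hWG hadjW hnd1' hnd2' E hE
      ((hgd W hWG E (hR hE)).mpr hd)

lemma zreg_image (hV : 2 < Module.rank K V)
    (hg : Set.BijOn g (Grass K V) (Grass K V))
    (hgd : ∀ X ∈ Grass K V, ∀ Y ∈ Grass K V, (Distant X Y ↔ Distant (g X) (g Y)))
    {R : Set (Submodule K V)} (hR : R ⊆ Grass K V)
    (h : IsZRegulus R) : IsZRegulus (g '' R) := by
  obtain ⟨hpart, hmax⟩ := h
  obtain ⟨g', hg'bij, hg'd, hleft, hright⟩ := exists_inverse hg hgd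
  refine ⟨(partial_iff_phi hV).mpr (phi_image hg hgd hR ((partial_iff_phi hV).mp hpart)), ?_⟩
  intro S hS hsub
  have hSG : S ⊆ Grass K V := hS.1.1.1
  have hS' : IsPartialZRegulus (g' '' S) :=
    (partial_iff_phi hV).mpr (phi_image hg'bij hg'd hSG ((partial_iff_phi hV).mp hS))
  have hRS' : R ⊆ g' '' S := by
    intro A hA
    refine ⟨g A, hsub ⟨A, hA, rfl⟩, hleft A (hR hA)⟩
  have heq : R = g' '' S := hmax _ hS' hRS'
  rw [heq]
  apply Set.eq_of_subset_of_subset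
  · rintro _ ⟨_, ⟨s, hs, rfl⟩, rfl⟩
    rwa [hright s (hSG hs)]
  · intro s hs
    exact ⟨g' s, ⟨s, hs, rfl⟩, hright s (hSG hs)⟩

end PartH
section PartI

/-- A common complement in `𝒢` of a distant pair in `𝒢` (the graph of an isomorphism). -/
lemma exists_common_compl {X Y : Submodule K V} (hX : X ∈ Grass K V) (hY : Y ∈ Grass K V)
    (hD : Distant X Y) : ∃ W ∈ Grass K V, Distant W X ∧ Distant W Y := by
  obtain ⟨e⟩ := hX
  have eq1 := Submodule.quotientEquivOfIsCompl X Y hD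
  set φ : ↥X ≃ₗ[K] ↥Y := e.trans eq1 with hφ
  set f : ↥X →ₗ[K] V := X.subtype + (Y.subtype.comp φ.toLinearMap) with hf
  have hfx : ∀ x : ↥X, f x = (x : V) + (φ x : V) := fun x => rfl
  have hXY : X ⊓ Y = ⊥ := disjoint_iff.mp hD.disjoint
  have hinj : Function.Injective f := by
    rw [injective_iff_map_eq_zero]
    intro x hx
    rw [hfx] at hx
    have hφx : (φ x : V) ∈ X ⊓ Y := by
      refine ⟨?_, (φ x).2⟩
      have : (φ x : V) = -(x : V) := by
        rw [eq_neg_iff_add_eq_zero, add_comm]; exact hx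
      rw [this]; exact X.neg_mem x.2
    rw [hXY, Submodule.mem_bot] at hφx
    have hx0 : φ x = 0 := Subtype.ext hφx
    have : x = 0 := by
      have := congrArg φ.symm hx0
      simpa using this
    exact this
  set W := LinearMap.range f with hW
  have hmemW : ∀ x : ↥X, (x : V) + (φ x : V) ∈ W := fun x => ⟨x, rfl⟩
  have hWX : IsCompl W X := by
    constructor
    · rw [disjoint_iff, eq_bot_iff]
      rintro v ⟨⟨x, rfl⟩, hvX⟩
      rw [hfx] at hvX ⊢
      have hφx : (φ x : V) ∈ X ⊓ Y := by
        refine ⟨?_, (φ x).2⟩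
        have : (φ x : V) = ((x : V) + (φ x : V)) - (x : V) := by abel
        rw [this]
        exact X.sub_mem hvX x.2
      rw [hXY, Submodule.mem_bot] at hφx
      have : x = 0 := by
        have h0 : φ x = 0 := Subtype.ext hφx
        have := congrArg φ.symm h0
        simpa using this
      rw [this]
      simp
    · rw [codisjoint_iff, eq_top_iff]
      intro v _
      have hv : v ∈ X ⊔ Y := by rw [codisjoint_iff.mp hD.codisjoint]; trivial
      obtain ⟨x, hx, y, hy, rfl⟩ := Submodule.mem_sup.mp hv
      set xe := φ.symm ⟨y, hy⟩ with hxe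
      have hfxe : (xe : V) + y ∈ W := by
        have := hmemW xe
        rwa [hxe, LinearEquiv.apply_symm_apply] at this
      have : x + y = ((xe : V) + y) + (x - (xe : V)) := by abel
      rw [this]
      exact Submodule.add_mem _ (Submodule.mem_sup_left hfxe)
        (Submodule.mem_sup_right (X.sub_mem hx xe.2))
  have hWY : IsCompl W Y := by
    constructor
    · rw [disjoint_iff, eq_bot_iff]
      rintro v ⟨⟨x, rfl⟩, hvY⟩
      rw [hfx] at hvY ⊢
      have hxm : (x : V) ∈ X ⊓ Y := by
        refine ⟨x.2, ?_⟩
        have : (x : V) = ((x : V) + (φ x : V)) - (φ x : V) := by abel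
        rw [this]
        exact Y.sub_mem hvY (φ x).2
      rw [hXY, Submodule.mem_bot] at hxm
      have hx0 : x = 0 := Subtype.ext hxm
      rw [hx0]
      simp
    · rw [codisjoint_iff, eq_top_iff]
      intro v _
      have hv : v ∈ X ⊔ Y := by rw [codisjoint_iff.mp hD.codisjoint]; trivial
      obtain ⟨x, hx, y, hy, rfl⟩ := Submodule.mem_sup.mp hv
      set xe : ↥X := ⟨x, hx⟩ with hxe
      have : x + y = ((xe : V) + (φ xe : V)) + (y - (φ xe : V)) := by
        rw [hxe]; abel
      rw [this]
      exact Submodule.add_mem _ (Submodule.mem_sup_left (hmemW xe))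
        (Submodule.mem_sup_right (Y.sub_mem hy (φ xe).2))
  have hWG : W ∈ Grass K V := by
    have e1 : ↥X ≃ₗ[K] ↥W := LinearEquiv.ofInjective f hinj
    have e2 := Submodule.quotientEquivOfIsCompl W X hWX
    exact ⟨(e1.symm.trans e2.symm : ↥W ≃ₗ[K] V ⧸ W)⟩
  exact ⟨W, hWG, hWX, hWY⟩

lemma partial_of_triple (hV : 2 < Module.rank K V) {X Y W : Submodule K V}
    (hX : X ∈ Grass K V) (hY : Y ∈ Grass K V) (hW : W ∈ Grass K V)
    (hXY : Distant X Y) (hWX : Distant W X) (hWY : Distant W Y) :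
    IsPartialZRegulus ({X, Y, W} : Set (Submodule K V)) := by
  have hneXY : X ≠ Y := hXY.ne hV
  have hneWX : W ≠ X := hWX.ne hV
  have hneWY : W ≠ Y := hWY.ne hV
  refine ⟨⟨⟨?_, ?_⟩, ?_⟩, ?_⟩
  · rintro A (rfl | rfl | rfl)
    exacts [hX, hY, hW]
  · rintro A (rfl | rfl | rfl) B (rfl | rfl | rfl) hne
    · exact absurd rfl hne
    · exact hXY
    · exact hWX.symm'
    · exact hXY.symm'
    · exact absurd rfl hne
    · exact hWY.symm'
    · exact hWX
    · exact hWY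
    · exact absurd rfl hne
  · exact ⟨X, by simp, Y, by simp, W, by simp, hneXY, hneWX.symm, hneWY.symm⟩
  · intro L _ E₀ h0 E₁ h1 E₂ h2 ne01 ne02 ne12 me0 me1 me2 E hEmem
    have hcover : E = E₀ ∨ E = E₁ ∨ E = E₂ := by
      simp only [Set.mem_insert_iff, Set.mem_singleton_iff] at h0 h1 h2 hEmem
      rcases h0 with rfl | rfl | rfl <;> rcases h1 with rfl | rfl | rfl <;>
        rcases h2 with rfl | rfl | rfl <;> rcases hEmem with rfl | rfl | rfl <;> tauto
    rcases hcover with rfl | rfl | rfl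
    exacts [me0, me1, me2]

lemma exists_zreg_extension {R₀ : Set (Submodule K V)} (h0 : IsPartialZRegulus R₀) :
    ∃ R, IsZRegulus R ∧ R₀ ⊆ R := by
  set 𝒮 : Set (Set (Submodule K V)) := {S | IsPartialZRegulus S ∧ R₀ ⊆ S} with h𝒮
  have hzorn := zorn_subset_nonempty 𝒮 ?_ R₀ ⟨h0, subset_rfl⟩
  · obtain ⟨m, hm0, hmem, hmax⟩ := hzorn
    refine ⟨m, ⟨hmem.1, ?_⟩, hm0⟩
    intro S hS hsub
    have hS𝒮 : S ∈ 𝒮 := ⟨hS, le_trans hm0 hsub⟩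
    exact le_antisymm hsub (hmax hS𝒮 hsub)
  · intro c hc𝒮 hchain hcne
    obtain ⟨s₀, hs₀⟩ := hcne
    have hpair : ∀ s ∈ c, ∀ t ∈ c, ∃ u ∈ c, s ⊆ u ∧ t ⊆ u := by
      intro s hs t ht
      rcases hchain.total hs ht with h | h
      · exact ⟨t, ht, h, subset_rfl⟩
      · exact ⟨s, hs, subset_rfl, h⟩
    refine ⟨⋃₀ c, ⟨⟨⟨⟨?_, ?_⟩, ?_⟩, ?_⟩, ?_⟩, fun s hs => Set.subset_sUnion_of_mem hs⟩
    · rintro A ⟨s, hs, hA⟩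
      exact ((hc𝒮 hs).1.1.1.1) hA
    · rintro A ⟨s, hs, hA⟩ B ⟨t, ht, hB⟩ hne
      obtain ⟨u, hu, hsu, htu⟩ := hpair s hs t ht
      exact ((hc𝒮 hu).1.1.1.2) (hsu hA) (htu hB) hne
    · obtain ⟨A, hA, B, hB, C, hC, hAB, hAC, hBC⟩ := (hc𝒮 hs₀).1.1.2
      exact ⟨A, ⟨s₀, hs₀, hA⟩, B, ⟨s₀, hs₀, hB⟩, C, ⟨s₀, hs₀, hC⟩, hAB, hAC, hBC⟩
    · intro L hL E₀ h0' E₁ h1' E₂ h2' ne01 ne02 ne12 me0 me1 me2 E hEmem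
      obtain ⟨t₀, ht₀, hE₀⟩ := h0'
      obtain ⟨t₁, ht₁, hE₁⟩ := h1'
      obtain ⟨t₂, ht₂, hE₂⟩ := h2'
      obtain ⟨tE, htE, hEm⟩ := hEmem
      obtain ⟨u₁, hu₁, h01, h11⟩ := hpair t₀ ht₀ t₁ ht₁
      obtain ⟨u₂, hu₂, h21, h22⟩ := hpair u₁ hu₁ t₂ ht₂
      obtain ⟨u₃, hu₃, h31, h32⟩ := hpair u₂ hu₂ tE htE
      exact ((hc𝒮 hu₃).1.2) L hL E₀ (h31 (h21 (h01 hE₀))) E₁ (h31 (h21 (h11 hE₁)))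
        E₂ (h31 (h22 hE₂)) ne01 ne02 ne12 me0 me1 me2 E (h32 hEm)
    · exact le_trans (hc𝒮 hs₀).2 (Set.subset_sUnion_of_mem hs₀)

end PartI

/-- Corollary 5.3. A bijection of `𝒢` is an automorphism of the
distant graph `(𝒢, △)` iff it is an automorphism of the space of `Z`-reguli
`(𝒢, ℜ)`, i.e. it and its inverse map `Z`-reguli onto `Z`-reguli. -/
theorem distantGraph_auto_iff_zReguli_auto (hV : 2 < Module.rank K V)
    (hG : (Grass K V).Nonempty)
    (f : Submodule K V → Submodule K V)
    (hf : Set.BijOn f (Grass K V) (Grass K V)) :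
    (∀ X ∈ Grass K V, ∀ Y ∈ Grass K V, (Distant X Y ↔ Distant (f X) (f Y))) ↔
    (∀ R : Set (Submodule K V), R ⊆ Grass K V → (IsZRegulus R ↔ IsZRegulus (f '' R))) := by
  constructor
  · intro hfd R hR
    obtain ⟨f', hf'bij, hf'd, hleft, hright⟩ := exists_inverse hf hfd
    constructor
    · exact fun h => zreg_image hV hf hfd hR h
    · intro h
      have himG : f '' R ⊆ Grass K V := by
        rintro _ ⟨A, hA, rfl⟩
        exact hf.mapsTo (hR hA)
      have h2 := zreg_image hV hf'bij hf'd himG h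
      have heq : f' '' (f '' R) = R := by
        apply Set.eq_of_subset_of_subset
        · rintro _ ⟨_, ⟨A, hA, rfl⟩, rfl⟩
          rwa [hleft A (hR hA)]
        · intro A hA
          exact ⟨f A, ⟨A, hA, rfl⟩, hleft A (hR hA)⟩
      rwa [heq] at h2
  · intro hreg X hX Y hY
    constructor
    · intro hD
      obtain ⟨W, hWG, hWX, hWY⟩ := exists_common_compl hX hY hD
      have hpart := partial_of_triple hV hX hY hWG hD hWX hWY
      obtain ⟨R, hRreg, hsub⟩ := exists_zreg_extension hpart
      have hRG : R ⊆ Grass K V := hRreg.1.1.1.1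
      have h2 := (hreg R hRG).mp hRreg
      have hfne : f X ≠ f Y := hf.injOn.ne hX hY (hD.ne hV)
      exact h2.1.1.1.2 ⟨X, hsub (by simp), rfl⟩ ⟨Y, hsub (by simp), rfl⟩ hfne
    · intro hD
      have hfX := hf.mapsTo hX
      have hfY := hf.mapsTo hY
      obtain ⟨W, hWG, hWX, hWY⟩ := exists_common_compl hfX hfY hD
      have hpart := partial_of_triple hV hfX hfY hWG hD hWX hWY
      obtain ⟨R', hR'reg, hsub⟩ := exists_zreg_extension hpart
      have hR'G : R' ⊆ Grass K V := hR'reg.1.1.1.1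
      set S : Set (Submodule K V) := {A | A ∈ Grass K V ∧ f A ∈ R'} with hS
      have hSG : S ⊆ Grass K V := fun A hA => hA.1
      have hfS : f '' S = R' := by
        apply Set.eq_of_subset_of_subset
        · rintro _ ⟨A, hA, rfl⟩
          exact hA.2
        · intro r hr
          obtain ⟨A, hAG, rfl⟩ := hf.surjOn (hR'G hr)
          exact ⟨A, ⟨hAG, hr⟩, rfl⟩
      have hSreg : IsZRegulus S := (hreg S hSG).mpr (hfS ▸ hR'reg)
      have hXS : X ∈ S := ⟨hX, hsub (by simp)⟩
      have hYS : Y ∈ S := ⟨hY, hsub (by simp)⟩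
      have hne : X ≠ Y := fun he => (hD.ne hV) (by rw [he])
      exact hSreg.1.1.1.2 hXS hYS hne
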